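/- arXiv:1605.06852 — 6 statements merged into one kernel-verified Lean document; each statement's English description precedes it below -/
import Mathlib

section
/- The only t-spanner of the greedy t-spanner is itself: if H is the output of the greedy spanner algorithm with stretch parameter t ≥ 1 on a weighted graph G, and H' is a subgraph of H that is a t-spanner for H, then H' = H (i.e., H' contains every edge of H). -/
open SimpleGraph
open scoped ENNReal

variable {V : Type*} [Fintype V] [DecidableEq V]

/-- The simple graph determined by a finite edge set. -/
def toSG (E : Finset (Sym2 V)) : SimpleGraph V := SimpleGraph.fromEdgeSet (↑E)

/-- Weight (in `ℝ≥0∞`) of a walk, given edge weights `w`. -/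
noncomputable def walkWeight (w : Sym2 V → ℝ) {G : SimpleGraph V} {u v : V}
    (p : G.Walk u v) : ℝ≥0∞ :=
  (p.edges.map fun e => ENNReal.ofReal (w e)).sum

/-- Shortest-path distance (in `ℝ≥0∞`) between the endpoints of the pair `e`
in the graph with edge set `H` and edge weights `w`.  (`⊤` if disconnected.) -/
noncomputable def edist (H : Finset (Sym2 V)) (w : Sym2 V → ℝ) (e : Sym2 V) : ℝ≥0∞ :=
  sInf {x | ∃ (u v : V) (p : (toSG H).Walk u v), e = s(u, v) ∧ walkWeight w p = x}

/-- Total weight of an edge set. -/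
noncomputable def gweight (w : Sym2 V → ℝ) (H : Finset (Sym2 V)) : ℝ := ∑ e ∈ H, w e

/-- `H` is a `t`-spanner of the graph with edge set `E` and weights `w`. -/
def IsSpanner (w : Sym2 V → ℝ) (t : ℝ) (E H : Finset (Sym2 V)) : Prop :=
  H ⊆ E ∧ ∀ u v : V, edist H w s(u, v) ≤ ENNReal.ofReal t * edist E w s(u, v)

open Classical in
/-- One pass of the greedy algorithm over a list of candidate edges. -/
noncomputable def greedyList (w : Sym2 V → ℝ) (t : ℝ) :
    List (Sym2 V) → Finset (Sym2 V) → Finset (Sym2 V)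
  | [], H => H
  | e :: l, H =>
      greedyList w t l (if ENNReal.ofReal (t * w e) < edist H w e then insert e H else H)

/-- `H` is an output of the greedy `t`-spanner algorithm on the graph with
edge set `E` and weights `w`: the edges of `E` are processed in some
non-decreasing order of weight. -/
def IsGreedy (w : Sym2 V → ℝ) (t : ℝ) (E H : Finset (Sym2 V)) : Prop :=
  ∃ l : List (Sym2 V), l.Nodup ∧ (∀ e, e ∈ l ↔ e ∈ E) ∧
    l.Pairwise (fun a b => w a ≤ w b) ∧ greedyList w t l ∅ = H

/-- `T` is a minimum spanning tree of the graph with edge set `E` and weights `w`. -/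
def IsMST (w : Sym2 V → ℝ) (E T : Finset (Sym2 V)) : Prop :=
  T ⊆ E ∧ (toSG T).IsTree ∧
    ∀ T' ⊆ E, (toSG T').IsTree → gweight w T ≤ gweight w T'

/-- The edge set of the complete graph on `V`. -/
def completeE (V : Type*) [Fintype V] [DecidableEq V] : Finset (Sym2 V) :=
  Finset.univ.filter fun e => ¬ e.IsDiag

/-- Metric distance as a weight function on unordered pairs. -/
noncomputable def mw (V : Type*) [MetricSpace V] : Sym2 V → ℝ :=
  Sym2.lift ⟨dist, fun a b => dist_comm a b⟩

/-- The weight function of the metric space induced by the graph with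
edge set `H` and weights `w` (shortest-path distances of pairs). -/
noncomputable def indw (H : Finset (Sym2 V)) (w : Sym2 V → ℝ) : Sym2 V → ℝ :=
  fun e => (edist H w e).toReal

/-- `d` satisfies the doubling property with doubling dimension (at most) `k`:
every ball of radius `r` can be covered by at most `2 ^ k` balls of radius `r / 2`. -/
def HasDoublingDim {M : Type*} (d : M → M → ℝ) (k : ℕ) : Prop :=
  ∀ (x : M) (r : ℝ), ∃ s : Finset M, s.card ≤ 2 ^ k ∧
    ∀ y, d x y ≤ r → ∃ c ∈ s, d c y ≤ r / 2

section MyAuxiliary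

variable {w : Sym2 V → ℝ} {t : ℝ}

lemma my_walkWeight_eq {G G' : SimpleGraph V} {u v u' v' : V} {p : G.Walk u v}
    {q : G'.Walk u' v'} (h : q.edges = p.edges) : walkWeight w q = walkWeight w p := by
  unfold walkWeight; rw [h]

lemma my_walkWeight_nil {G : SimpleGraph V} {u : V} :
    walkWeight w (SimpleGraph.Walk.nil : G.Walk u u) = 0 := rfl

lemma my_walkWeight_cons {G : SimpleGraph V} {u v x : V} (h : G.Adj u v) (p : G.Walk v x) :
    walkWeight w (SimpleGraph.Walk.cons h p) = ENNReal.ofReal (w s(u, v)) + walkWeight w p := by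
  unfold walkWeight
  simp [SimpleGraph.Walk.edges_cons]

lemma my_walkWeight_append {G : SimpleGraph V} {u v x : V} (p : G.Walk u v) (q : G.Walk v x) :
    walkWeight w (p.append q) = walkWeight w p + walkWeight w q := by
  unfold walkWeight
  simp [SimpleGraph.Walk.edges_append]

lemma my_walkWeight_reverse {G : SimpleGraph V} {u v : V} (p : G.Walk u v) :
    walkWeight w p.reverse = walkWeight w p := by
  unfold walkWeight
  rw [SimpleGraph.Walk.edges_reverse, List.map_reverse, List.sum_reverse]

lemma my_edist_le {H : Finset (Sym2 V)} {u v : V} (p : (toSG H).Walk u v) :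
    edist H w s(u, v) ≤ walkWeight w p := by
  unfold _root_.edist
  exact sInf_le ⟨u, v, p, rfl, rfl⟩

lemma my_walk_edge_mem {H : Finset (Sym2 V)} {u v : V} {p : (toSG H).Walk u v} {e : Sym2 V}
    (he : e ∈ p.edges) : e ∈ H ∧ ¬ e.IsDiag := by
  have h := p.edges_subset_edgeSet he
  rw [toSG, edgeSet_fromEdgeSet] at h
  exact ⟨h.1, h.2⟩

lemma my_transfer {A B : Finset (Sym2 V)} {u v : V} (p : (toSG A).Walk u v)
    (h : ∀ e ∈ p.edges, e ∈ B) : ∃ q : (toSG B).Walk u v, q.edges = p.edges := by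
  refine ⟨p.transfer (toSG B) (fun e he => ?_), p.edges_transfer _⟩
  rw [toSG, edgeSet_fromEdgeSet]
  exact ⟨h e he, (my_walk_edge_mem he).2⟩

lemma my_adj {H : Finset (Sym2 V)} {u v : V} (h : s(u, v) ∈ H) (huv : u ≠ v) :
    (toSG H).Adj u v := by
  rw [toSG, fromEdgeSet_adj]
  exact ⟨h, huv⟩

lemma my_edist_le_w {H : Finset (Sym2 V)} {u v : V} (h : s(u, v) ∈ H) (huv : u ≠ v) :
    edist H w s(u, v) ≤ ENNReal.ofReal (w s(u, v)) := by
  have h2 := my_edist_le (w := w) (SimpleGraph.Walk.cons (my_adj h huv) SimpleGraph.Walk.nil)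
  rwa [my_walkWeight_cons, my_walkWeight_nil, add_zero] at h2

lemma my_bypass_le {G : SimpleGraph V} {u v : V} (p : G.Walk u v) :
    walkWeight w p.bypass ≤ walkWeight w p := by
  have hnd : p.bypass.edges.Nodup := p.bypass_isPath.isTrail.edges_nodup
  have hsp : List.Subperm p.bypass.edges p.edges :=
    List.subperm_of_subset hnd p.edges_bypass_subset
  obtain ⟨m, hperm, hsub⟩ := hsp
  have h1 : (m.map fun e => ENNReal.ofReal (w e)).sum
      = (p.bypass.edges.map fun e => ENNReal.ofReal (w e)).sum :=
    (hperm.map _).sum_eq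
  have h2 : (m.map fun e => ENNReal.ofReal (w e)).sum
      ≤ (p.edges.map fun e => ENNReal.ofReal (w e)).sum :=
    (hsub.map _).sum_le_sum (fun a _ => zero_le)
  unfold walkWeight
  rw [← h1]
  exact h2

lemma my_edist_exists {H : Finset (Sym2 V)} {u v : V} (h : edist H w s(u, v) < ⊤) :
    ∃ (u' v' : V) (p : (toSG H).Walk u' v'),
      s(u, v) = s(u', v') ∧ p.IsPath ∧ walkWeight w p = edist H w s(u, v) := by
  classical
  haveI : DecidableRel (toSG H).Adj := Classical.decRel _
  set S : Set ℝ≥0∞ :=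
    {x | ∃ (u' v' : V) (p : (toSG H).Walk u' v'), s(u, v) = s(u', v') ∧ walkWeight w p = x}
    with hS
  set T : Set ℝ≥0∞ :=
    {x | ∃ (u' v' : V) (p : (toSG H).Walk u' v'),
      s(u, v) = s(u', v') ∧ p.IsPath ∧ walkWeight w p = x} with hT
  have hES : edist H w s(u, v) = sInf S := rfl
  have hTS : T ⊆ S := by
    rintro x ⟨u', v', p, hp, _, hx⟩
    exact ⟨u', v', p, hp, hx⟩
  have hST : ∀ x ∈ S, ∃ y ∈ T, y ≤ x := by
    rintro x ⟨u', v', p, hp, rfl⟩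
    exact ⟨walkWeight w p.bypass, ⟨u', v', p.bypass, hp, p.bypass_isPath, rfl⟩, my_bypass_le p⟩
  have hinf : sInf T = sInf S := by
    refine le_antisymm (le_sInf fun x hx => ?_) (sInf_le_sInf hTS)
    obtain ⟨y, hy, hle⟩ := hST x hx
    exact (sInf_le hy).trans hle
  have hfin : T.Finite := by
    have hsub : T ⊆ (Set.range fun q : (toSG H).Path u v =>
          walkWeight w (q : (toSG H).Walk u v)) ∪
        (Set.range fun q : (toSG H).Path v u => walkWeight w (q : (toSG H).Walk v u)) := by
      rintro x ⟨u', v', p, hp, hpath, rfl⟩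
      rw [Sym2.eq_iff] at hp
      rcases hp with ⟨rfl, rfl⟩ | ⟨rfl, rfl⟩
      · exact Or.inl ⟨⟨p, hpath⟩, rfl⟩
      · exact Or.inr ⟨⟨p, hpath⟩, rfl⟩
    exact Set.Finite.subset ((Set.finite_range _).union (Set.finite_range _)) hsub
  have hne : T.Nonempty := by
    by_contra hne
    rw [Set.not_nonempty_iff_eq_empty] at hne
    rw [hES, ← hinf, hne, sInf_empty] at h
    exact lt_irrefl _ h
  obtain ⟨u', v', p, hp, hpath, hx⟩ := hne.csInf_mem hfin
  exact ⟨u', v', p, hp, hpath, by rw [hx, hinf, hES]⟩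

lemma my_greedy_mono (w : Sym2 V → ℝ) (t : ℝ) (l : List (Sym2 V)) (S : Finset (Sym2 V)) :
    S ⊆ greedyList w t l S := by
  induction l generalizing S with
  | nil => simp [greedyList]
  | cons e l ih =>
    simp only [greedyList]
    refine subset_trans ?_ (ih _)
    split_ifs
    · exact Finset.subset_insert _ _
    · exact subset_rfl

lemma my_greedy_subset (w : Sym2 V → ℝ) (t : ℝ) (l : List (Sym2 V)) (S : Finset (Sym2 V)) :
    greedyList w t l S ⊆ S ∪ l.toFinset := by
  induction l generalizing S with
  | nil => simp [greedyList]
  | cons e l ih =>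
    simp only [greedyList]
    calc greedyList w t l (if ENNReal.ofReal (t * w e) < edist S w e then insert e S else S)
        ⊆ (if ENNReal.ofReal (t * w e) < edist S w e then insert e S else S) ∪ l.toFinset :=
          ih _
      _ ⊆ (insert e S) ∪ l.toFinset := by
          refine Finset.union_subset_union ?_ subset_rfl
          split_ifs
          · exact subset_rfl
          · exact Finset.subset_insert _ _
      _ = S ∪ (e :: l).toFinset := by
          rw [List.toFinset_cons, Finset.insert_union, Finset.union_insert]

lemma my_greedy_append (w : Sym2 V → ℝ) (t : ℝ) (l₁ l₂ : List (Sym2 V)) (S : Finset (Sym2 V)) :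
    greedyList w t (l₁ ++ l₂) S = greedyList w t l₂ (greedyList w t l₁ S) := by
  induction l₁ generalizing S with
  | nil => simp [greedyList]
  | cons e l ih =>
    simp only [List.cons_append, greedyList]
    exact ih _

lemma my_greedy_cond {w : Sym2 V → ℝ} {t : ℝ} {l : List (Sym2 V)} (hn : l.Nodup) {i : ℕ}
    (hi : i < l.length) {f : Sym2 V} (hfi : l[i] = f) {H : Finset (Sym2 V)}
    (hgl : greedyList w t l ∅ = H) (hfH : f ∈ H) :
    ENNReal.ofReal (t * w f) < edist (greedyList w t (l.take i) ∅) w f ∧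
    greedyList w t (l.take i) ∅ ⊆ H ∧
    ∀ g ∈ H, g ∈ l.take i → g ∈ greedyList w t (l.take i) ∅ := by
  classical
  set S₁ := greedyList w t (l.take i) ∅ with hS₁
  have hdecomp : l = l.take i ++ f :: l.drop (i + 1) := by
    conv_lhs => rw [← List.take_append_drop i l]
    rw [List.drop_eq_getElem_cons hi, hfi]
  have hn' : (l.take i ++ f :: l.drop (i + 1)).Nodup := hdecomp ▸ hn
  rw [List.nodup_append] at hn'
  obtain ⟨hnt, hnd, hdisj⟩ := hn'
  have hftake : f ∉ l.take i := fun hmem => hdisj f hmem f List.mem_cons_self rfl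
  have hfdrop : f ∉ l.drop (i + 1) := (List.nodup_cons.1 hnd).1
  have hrun : H = greedyList w t (l.drop (i + 1))
      (if ENNReal.ofReal (t * w f) < edist S₁ w f then insert f S₁ else S₁) := by
    rw [← hgl]
    conv_lhs => rw [hdecomp]
    rw [my_greedy_append]
    simp only [greedyList]
    rfl
  have hifsub : (if ENNReal.ofReal (t * w f) < edist S₁ w f then insert f S₁ else S₁)
      ⊆ insert f S₁ := by
    split_ifs
    · exact subset_rfl
    · exact Finset.subset_insert _ _
  have hS₁sub : S₁ ⊆ H := by
    rw [hrun]
    refine subset_trans ?_ (my_greedy_mono w t _ _)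
    split_ifs
    · exact Finset.subset_insert _ _
    · exact subset_rfl
  have hcond : ENNReal.ofReal (t * w f) < edist S₁ w f := by
    by_contra hc
    rw [if_neg hc] at hrun
    have h1 : f ∈ S₁ ∪ (l.drop (i + 1)).toFinset :=
      my_greedy_subset w t _ _ (hrun ▸ hfH)
    rcases Finset.mem_union.1 h1 with h1 | h1
    · have h2 : f ∈ (∅ : Finset (Sym2 V)) ∪ (l.take i).toFinset :=
        my_greedy_subset w t _ _ h1
      rcases Finset.mem_union.1 h2 with h2 | h2
      · exact absurd h2 (Finset.notMem_empty _)
      · exact hftake (List.mem_toFinset.1 h2)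
    · exact hfdrop (List.mem_toFinset.1 h1)
  refine ⟨hcond, hS₁sub, ?_⟩
  intro g hgH hgtake
  have h1 : g ∈ (if ENNReal.ofReal (t * w f) < edist S₁ w f then insert f S₁ else S₁)
      ∪ (l.drop (i + 1)).toFinset := my_greedy_subset w t _ _ (hrun ▸ hgH)
  rcases Finset.mem_union.1 h1 with h1 | h1
  · have h2 := hifsub h1
    rcases Finset.mem_insert.1 h2 with rfl | h2
    · exact absurd hgtake hftake
    · exact h2
  · exact absurd (List.mem_toFinset.1 h1) (fun hm => hdisj g hgtake g (List.mem_cons_of_mem _ hm) rfl)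

lemma my_nondiag {w : Sym2 V → ℝ} {t : ℝ} {S : Finset (Sym2 V)} {f : Sym2 V}
    (h : ENNReal.ofReal (t * w f) < edist S w f) : ¬ f.IsDiag := by
  intro hd
  induction f using Sym2.ind with
  | _ x y =>
    rw [Sym2.mk_isDiag_iff] at hd
    subst hd
    have h0 : edist S w s(x, x) ≤ 0 := by
      have h1 := my_edist_le (w := w) (SimpleGraph.Walk.nil : (toSG S).Walk x x)
      rwa [my_walkWeight_nil] at h1
    exact absurd (h.trans_le h0) (by simp)

lemma my_split {G : SimpleGraph V} {u v : V} (p : G.Walk u v) (hp : p.edges.Nodup)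
    {f : Sym2 V} (hf : f ∈ p.edges) :
    ∃ (x y : V) (q : G.Walk u x) (r : G.Walk y v), f = s(x, y) ∧
      walkWeight w p = walkWeight w q + ENNReal.ofReal (w f) + walkWeight w r ∧
      (∀ g ∈ q.edges, g ∈ p.edges ∧ g ≠ f) ∧ (∀ g ∈ r.edges, g ∈ p.edges ∧ g ≠ f) := by
  induction p with
  | nil => simp at hf
  | @cons a b c hadj p' ih =>
    rw [SimpleGraph.Walk.edges_cons] at hf hp
    by_cases hfe : f = s(a, b)
    · refine ⟨a, b, SimpleGraph.Walk.nil, p', hfe, ?_, by simp, ?_⟩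
      · rw [my_walkWeight_cons, my_walkWeight_nil, hfe, zero_add]
      · intro g hg
        refine ⟨by rw [SimpleGraph.Walk.edges_cons]; exact List.mem_cons_of_mem _ hg, ?_⟩
        rintro rfl
        rw [hfe] at hg
        exact (List.nodup_cons.1 hp).1 hg
    · have hf' : f ∈ p'.edges := by
        rcases List.mem_cons.1 hf with h | h
        · exact absurd h hfe
        · exact h
      obtain ⟨x, y, q', r', hfxy, hweq, hq', hr'⟩ := ih (List.nodup_cons.1 hp).2 hf'
      refine ⟨x, y, SimpleGraph.Walk.cons hadj q', r', hfxy, ?_, ?_, ?_⟩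
      · rw [my_walkWeight_cons, my_walkWeight_cons, hweq]
        ring
      · intro g hg
        rw [SimpleGraph.Walk.edges_cons] at hg
        rcases List.mem_cons.1 hg with rfl | hg
        · exact ⟨List.mem_cons_self, fun h => hfe h.symm⟩
        · obtain ⟨h1, h2⟩ := hq' g hg
          exact ⟨List.mem_cons_of_mem _ h1, h2⟩
      · intro g hg
        obtain ⟨h1, h2⟩ := hr' g hg
        exact ⟨List.mem_cons_of_mem _ h1, h2⟩

end MyAuxiliary

/-- The only `t`-spanner of the greedy `t`-spanner is itself:
if `H` is the output of the greedy algorithm with stretch `t ≥ 1` on a weighted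
graph `G = (V, E, w)` with positive edge weights, and `H'` is a subgraph of `H`
that is a `t`-spanner for `H`, then `H' = H`. -/
theorem greedy_self_spanner (E H H' : Finset (Sym2 V)) (w : Sym2 V → ℝ) (t : ℝ)
    (ht : 1 ≤ t) (hw : ∀ e ∈ E, 0 < w e) (hconn : (toSG E).Connected)
    (hH : IsGreedy w t E H) (hH' : IsSpanner w t H H') :
    H' = H := by
  classical
  obtain ⟨l, hnd, hlE, hsort, hgl⟩ := hH
  obtain ⟨hsub, hspan⟩ := hH'
  have hHl : ∀ g ∈ H, g ∈ l := by
    intro g hg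
    have h1 : g ∈ (∅ : Finset (Sym2 V)) ∪ l.toFinset := my_greedy_subset w t l ∅ (hgl ▸ hg)
    rcases Finset.mem_union.1 h1 with h1 | h1
    · exact absurd h1 (Finset.notMem_empty _)
    · exact List.mem_toFinset.1 h1
  have ht0 : (0 : ℝ) ≤ t := zero_le_one.trans ht
  refine Finset.Subset.antisymm hsub ?_
  intro e heH
  by_contra heH'
  induction e using Sym2.ind with
  | _ u v =>
    -- greedy condition at the edge s(u,v) itself, to get non-diagonality
    have heL : s(u, v) ∈ l := hHl _ heH
    have heidx : l.idxOf s(u, v) < l.length := List.idxOf_lt_length_iff.2 heL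
    obtain ⟨hconde, _, _⟩ :=
      my_greedy_cond hnd heidx (List.getElem_idxOf heidx) hgl heH
    have hediag : ¬ (s(u, v)).IsDiag := my_nondiag hconde
    have huv : u ≠ v := by simpa [Sym2.mk_isDiag_iff] using hediag
    -- spanner bound
    have hBe : edist H' w s(u, v) ≤ ENNReal.ofReal (t * w s(u, v)) := by
      calc edist H' w s(u, v) ≤ ENNReal.ofReal t * edist H w s(u, v) := hspan u v
        _ ≤ ENNReal.ofReal t * ENNReal.ofReal (w s(u, v)) :=
            mul_le_mul_right (my_edist_le_w heH huv) _
        _ = ENNReal.ofReal (t * w s(u, v)) := (ENNReal.ofReal_mul ht0).symm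
    have hlt : edist H' w s(u, v) < ⊤ := hBe.trans_lt ENNReal.ofReal_lt_top
    obtain ⟨u', v', P, hP, hPpath, hPw⟩ := my_edist_exists hlt
    have hPH' : ∀ g ∈ P.edges, g ∈ H' := fun g hg => (my_walk_edge_mem hg).1
    have hPH : ∀ g ∈ P.edges, g ∈ H := fun g hg => hsub (hPH' g hg)
    have hPne : ∀ g ∈ P.edges, g ≠ s(u, v) := fun g hg h => heH' (h ▸ hPH' g hg)
    -- the latest edge (in the greedy order) among the edges of P together with s(u,v)
    set F : Finset (Sym2 V) := insert s(u, v) P.edges.toFinset with hF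
    have hFH : ∀ g ∈ F, g ∈ H := by
      intro g hg
      rcases Finset.mem_insert.1 hg with rfl | hg
      · exact heH
      · exact hPH g (List.mem_toFinset.1 hg)
    obtain ⟨f, hfF, hfmax⟩ :=
      F.exists_max_image (fun g => l.idxOf g) ⟨s(u, v), Finset.mem_insert_self _ _⟩
    have hfl : f ∈ l := hHl f (hFH f hfF)
    have hil : l.idxOf f < l.length := List.idxOf_lt_length_iff.2 hfl
    have hfi : l[l.idxOf f] = f := List.getElem_idxOf hil
    have hmemtake : ∀ g ∈ F, g ≠ f → g ∈ l.take (l.idxOf f) := by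
      intro g hg hgf
      have hgl' : g ∈ l := hHl g (hFH g hg)
      have hgll : l.idxOf g < l.length := List.idxOf_lt_length_iff.2 hgl'
      have hgi : l.idxOf g < l.idxOf f := by
        rcases (hfmax g hg).lt_or_eq with h | h
        · exact h
        · exact absurd ((List.idxOf_inj hgl').1 h) hgf
      exact List.mem_take_iff_getElem.2
        ⟨l.idxOf g, lt_min hgi hgll, List.getElem_idxOf hgll⟩
    obtain ⟨hcondf, hS₁sub, hHtake⟩ := my_greedy_cond hnd hil hfi hgl (hFH f hfF)
    set S₁ := greedyList w t (l.take (l.idxOf f)) ∅ with hS₁def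
    have hmemS₁ : ∀ g ∈ F, g ≠ f → g ∈ S₁ :=
      fun g hg hgf => hHtake g (hFH g hg) (hmemtake g hg hgf)
    rcases Finset.mem_insert.1 hfF with hfe | hfP
    · -- case f = s(u,v): the whole walk P lives in S₁
      have hPS₁ : ∀ g ∈ P.edges, g ∈ S₁ := by
        intro g hg
        refine hmemS₁ g (Finset.mem_insert_of_mem (List.mem_toFinset.2 hg)) ?_
        rw [hfe]
        exact hPne g hg
      obtain ⟨Q, hQ⟩ := my_transfer P hPS₁
      have h1 : edist S₁ w s(u, v) ≤ walkWeight w Q := by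
        unfold _root_.edist
        exact sInf_le ⟨u', v', Q, hP, rfl⟩
      rw [my_walkWeight_eq hQ, hPw] at h1
      rw [hfe] at hcondf
      exact absurd (hcondf.trans_le (h1.trans hBe)) (lt_irrefl _)
    · -- case f ∈ P.edges
      have hfP' : f ∈ P.edges := List.mem_toFinset.1 hfP
      have hfne : f ≠ s(u, v) := hPne f hfP'
      have hes : s(u, v) ∈ S₁ :=
        hmemS₁ _ (Finset.mem_insert_self _ _) (fun h => hfne h.symm)
      obtain ⟨x, y, q, r, hfxy, hweq, hq, hr⟩ :=
        my_split (w := w) P hPpath.isTrail.edges_nodup hfP'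
      have hqS₁ : ∀ g ∈ q.edges, g ∈ S₁ := by
        intro g hg
        obtain ⟨h1, h2⟩ := hq g hg
        exact hmemS₁ g (Finset.mem_insert_of_mem (List.mem_toFinset.2 h1)) h2
      have hrS₁ : ∀ g ∈ r.edges, g ∈ S₁ := by
        intro g hg
        obtain ⟨h1, h2⟩ := hr g hg
        exact hmemS₁ g (Finset.mem_insert_of_mem (List.mem_toFinset.2 h1)) h2
      obtain ⟨q', hq'⟩ := my_transfer q hqS₁
      obtain ⟨r', hr'⟩ := my_transfer r hrS₁
      have hne' : u' ≠ v' := by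
        rintro rfl
        rw [Sym2.eq_iff] at hP
        rcases hP with ⟨rfl, rfl⟩ | ⟨rfl, rfl⟩ <;> exact huv rfl
      have hadj : (toSG S₁).Adj u' v' := my_adj (by rw [← hP]; exact hes) hne'
      set W : (toSG S₁).Walk x y :=
        (q'.reverse).append ((SimpleGraph.Walk.cons hadj SimpleGraph.Walk.nil).append r'.reverse)
        with hW
      have hWw : walkWeight w W
          = walkWeight w q + ENNReal.ofReal (w s(u, v)) + walkWeight w r := by
        rw [hW, my_walkWeight_append, my_walkWeight_append, my_walkWeight_reverse,
          my_walkWeight_reverse, my_walkWeight_cons, my_walkWeight_nil,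
          my_walkWeight_eq hq', my_walkWeight_eq hr', ← hP]
        ring
      have h2 : edist S₁ w f ≤ walkWeight w W := by
        unfold _root_.edist
        exact sInf_le ⟨x, y, W, hfxy, rfl⟩
      have hfdropmem : f ∈ l.drop (l.idxOf f) := by
        rw [List.drop_eq_getElem_cons hil, hfi]
        exact List.mem_cons_self
      have hetake : s(u, v) ∈ l.take (l.idxOf f) :=
        hmemtake _ (Finset.mem_insert_self _ _) (fun h => hfne h.symm)
      have hwef : w s(u, v) ≤ w f :=
        hsort.rel_of_mem_take_of_mem_drop hetake hfdropmem
      have htwef : t * w s(u, v) ≤ t * w f := mul_le_mul_of_nonneg_left hwef ht0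
      have hchain : edist S₁ w f + ENNReal.ofReal (w f)
          ≤ ENNReal.ofReal (t * w f) + ENNReal.ofReal (w f) := by
        calc edist S₁ w f + ENNReal.ofReal (w f)
            ≤ walkWeight w W + ENNReal.ofReal (w f) := add_le_add_left h2 _
          _ = walkWeight w P + ENNReal.ofReal (w s(u, v)) := by rw [hWw, hweq]; ring
          _ ≤ ENNReal.ofReal (t * w s(u, v)) + ENNReal.ofReal (w s(u, v)) :=
              add_le_add (le_trans (le_of_eq hPw) hBe) le_rfl
          _ ≤ ENNReal.ofReal (t * w f) + ENNReal.ofReal (w f) :=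
              add_le_add (ENNReal.ofReal_le_ofReal htwef) (ENNReal.ofReal_le_ofReal hwef)
      have hfin : edist S₁ w f ≤ ENNReal.ofReal (t * w f) :=
        (ENNReal.add_le_add_iff_right ENNReal.ofReal_ne_top).1 hchain
      exact absurd hcondf (not_lt.2 hfin)
end

section
/- The greedy t-spanner H of a weighted graph G contains all edges of some minimum spanning tree of G; consequently G and H share a common MST. -/
open SimpleGraph
open scoped ENNReal

variable {V : Type*} [Fintype V] [DecidableEq V]

section AuxGreedyMST
set_option linter.unusedSectionVars false
set_option maxHeartbeats 1000000

lemma toSG_adj {A : Finset (Sym2 V)} {x y : V} :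
    (toSG A).Adj x y ↔ s(x, y) ∈ A ∧ x ≠ y := by
  simp [toSG]

lemma toSG_mono {A B : Finset (Sym2 V)} (h : A ⊆ B) : toSG A ≤ toSG B :=
  SimpleGraph.fromEdgeSet_mono (by exact_mod_cast h)

lemma reach_of_adj_reach {A B : Finset (Sym2 V)}
    (h : ∀ x y, (toSG A).Adj x y → (toSG B).Reachable x y) {x y : V}
    (hr : (toSG A).Reachable x y) : (toSG B).Reachable x y := by
  obtain ⟨p⟩ := hr
  induction p with
  | nil => exact Reachable.refl _
  | cons ha _ ih => exact (h _ _ ha).trans ih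

lemma reach_insert_cases {B : Finset (Sym2 V)} {u v x y : V}
    (h : (toSG (insert s(u, v) B)).Reachable x y) :
    (toSG B).Reachable x y ∨
      ((toSG B).Reachable x u ∧ (toSG B).Reachable v y) ∨
      ((toSG B).Reachable x v ∧ (toSG B).Reachable u y) := by
  obtain ⟨p⟩ := h
  induction p with
  | nil => exact Or.inl (Reachable.refl _)
  | @cons a b c hab p ih =>
    rw [toSG_adj, Finset.mem_insert] at hab
    obtain ⟨(he | hB), hne⟩ := hab
    · rw [Sym2.eq_iff] at he
      rcases he with ⟨rfl, rfl⟩ | ⟨rfl, rfl⟩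
      · rcases ih with h1 | ⟨h1, h2⟩ | ⟨h1, h2⟩
        · exact Or.inr (Or.inl ⟨Reachable.refl _, h1⟩)
        · exact Or.inl (h1.symm.trans h2)
        · exact Or.inl h2
      · rcases ih with h1 | ⟨h1, h2⟩ | ⟨h1, h2⟩
        · exact Or.inr (Or.inr ⟨Reachable.refl _, h1⟩)
        · exact Or.inl h2
        · exact Or.inl (h1.symm.trans h2)
    · have hR : (toSG B).Reachable a b := (toSG_adj.mpr ⟨hB, hne⟩).reachable
      rcases ih with h1 | ⟨h1, h2⟩ | ⟨h1, h2⟩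
      · exact Or.inl (hR.trans h1)
      · exact Or.inr (Or.inl ⟨hR.trans h1, h2⟩)
      · exact Or.inr (Or.inr ⟨hR.trans h1, h2⟩)

noncomputable def ncomp (A : Finset (Sym2 V)) : ℕ := Nat.card (toSG A).ConnectedComponent

noncomputable def compMap {A B : Finset (Sym2 V)}
    (h : ∀ x y, (toSG A).Adj x y → (toSG B).Reachable x y) :
    (toSG A).ConnectedComponent → (toSG B).ConnectedComponent :=
  SimpleGraph.ConnectedComponent.lift (fun v => (toSG B).connectedComponentMk v)
    (fun _ _ p _ => SimpleGraph.ConnectedComponent.sound (reach_of_adj_reach h p.reachable))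

lemma compMap_mk {A B : Finset (Sym2 V)}
    (h : ∀ x y, (toSG A).Adj x y → (toSG B).Reachable x y) (v : V) :
    compMap h ((toSG A).connectedComponentMk v) = (toSG B).connectedComponentMk v := rfl

lemma compMap_surjective {A B : Finset (Sym2 V)}
    (h : ∀ x y, (toSG A).Adj x y → (toSG B).Reachable x y) :
    Function.Surjective (compMap h) := by
  intro c
  induction c using SimpleGraph.ConnectedComponent.ind with
  | _ v => exact ⟨(toSG A).connectedComponentMk v, rfl⟩

lemma ncomp_le {A B : Finset (Sym2 V)}
    (h : ∀ x y, (toSG A).Adj x y → (toSG B).Reachable x y) :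
    ncomp B ≤ ncomp A :=
  Nat.card_le_card_of_surjective (compMap h) (compMap_surjective h)

lemma ncomp_lt {A B : Finset (Sym2 V)}
    (h : ∀ x y, (toSG A).Adj x y → (toSG B).Reachable x y) {u v : V}
    (hA : ¬(toSG A).Reachable u v) (hB : (toSG B).Reachable u v) :
    ncomp B < ncomp A := by
  have : Fintype (toSG A).ConnectedComponent := Fintype.ofFinite _
  have : Fintype (toSG B).ConnectedComponent := Fintype.ofFinite _
  rw [ncomp, ncomp, Nat.card_eq_fintype_card, Nat.card_eq_fintype_card]
  refine Fintype.card_lt_of_surjective_not_injective _ (compMap_surjective h) ?_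
  intro hinj
  exact hA (SimpleGraph.ConnectedComponent.exact (hinj (by
    rw [compMap_mk, compMap_mk]
    exact SimpleGraph.ConnectedComponent.sound hB)))
lemma adj_reach_of_subset {A B : Finset (Sym2 V)} (h : A ⊆ B) :
    ∀ x y, (toSG A).Adj x y → (toSG B).Reachable x y :=
  fun _ _ ha => ((toSG_mono h) ha).reachable

lemma ncomp_insert_ge (B : Finset (Sym2 V)) (e : Sym2 V) :
    ncomp B ≤ ncomp (insert e B) + 1 := by
  classical
  induction e using Sym2.ind with
  | _ u v =>
  set G := toSG B with hG
  set G' := toSG (insert s(u, v) B) with hG'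
  let g := compMap (adj_reach_of_subset (Finset.subset_insert s(u,v) B))
  let f : G.ConnectedComponent → Option G'.ConnectedComponent :=
    fun C => if C = G.connectedComponentMk v then none else some (g C)
  have hinj : Function.Injective f := by
    intro C D
    induction C using SimpleGraph.ConnectedComponent.ind with
    | _ x =>
    induction D using SimpleGraph.ConnectedComponent.ind with
    | _ y =>
    intro hCD
    by_cases hC : G.connectedComponentMk x = G.connectedComponentMk v
    · by_cases hD : G.connectedComponentMk y = G.connectedComponentMk v
      · rw [hC, hD]
      · simp only [f, if_pos hC, if_neg hD] at hCD
        exact absurd hCD (by simp)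
    · by_cases hD : G.connectedComponentMk y = G.connectedComponentMk v
      · simp only [f, if_neg hC, if_pos hD] at hCD
        exact absurd hCD (by simp)
      · simp only [f, if_neg hC, if_neg hD, Option.some_inj] at hCD
        have : g (G.connectedComponentMk x) = g (G.connectedComponentMk y) := hCD
        rw [show g = compMap (adj_reach_of_subset (Finset.subset_insert s(u,v) B)) from rfl,
          compMap_mk, compMap_mk] at this
        have hr := SimpleGraph.ConnectedComponent.exact this
        rcases reach_insert_cases hr with h1 | ⟨h1, h2⟩ | ⟨h1, h2⟩
        · exact SimpleGraph.ConnectedComponent.sound h1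
        · exact absurd (SimpleGraph.ConnectedComponent.sound h2.symm) hD
        · exact absurd (SimpleGraph.ConnectedComponent.sound h1) hC
  calc ncomp B ≤ Nat.card (Option G'.ConnectedComponent) :=
        Nat.card_le_card_of_injective f hinj
    _ = ncomp (insert s(u, v) B) + 1 := by
        have : Fintype G'.ConnectedComponent := Fintype.ofFinite _
        simp [ncomp, Nat.card_eq_fintype_card, ← hG']

lemma ncomp_empty : ncomp (∅ : Finset (Sym2 V)) = Fintype.card V := by
  have hbot : toSG (∅ : Finset (Sym2 V)) = ⊥ := by
    simp [toSG]
  have hbij : Function.Bijective ((⊥ : SimpleGraph V).connectedComponentMk) := by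
    constructor
    · intro a b hab
      exact (SimpleGraph.reachable_bot).mp (SimpleGraph.ConnectedComponent.exact hab)
    · intro c
      induction c using SimpleGraph.ConnectedComponent.ind with
      | _ v => exact ⟨v, rfl⟩
  rw [ncomp, hbot, ← Nat.card_eq_fintype_card]
  exact (Nat.card_eq_of_bijective _ hbij).symm

lemma card_le_ncomp_add_card (A : Finset (Sym2 V)) :
    Fintype.card V ≤ ncomp A + A.card := by
  classical
  induction A using Finset.induction_on with
  | empty => simp [ncomp_empty]
  | insert _ _ he ih =>
    rename_i e A
    calc Fintype.card V ≤ ncomp A + A.card := ih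
      _ ≤ (ncomp (insert e A) + 1) + A.card := by
          exact Nat.add_le_add_right (ncomp_insert_ge A e) _
      _ = ncomp (insert e A) + (insert e A).card := by
          rw [Finset.card_insert_of_notMem he]; ring
lemma toSG_sdiff_edge (A : Finset (Sym2 V)) (f : Sym2 V) :
    toSG A \ SimpleGraph.fromEdgeSet {f} = toSG (A.erase f) := by
  ext x y
  simp only [SimpleGraph.sdiff_adj, toSG_adj, SimpleGraph.fromEdgeSet_adj,
    Set.mem_singleton_iff, Finset.mem_erase]
  constructor
  · rintro ⟨⟨hmem, hne⟩, hnot⟩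
    refine ⟨⟨?_, hmem⟩, hne⟩
    intro hEq
    exact hnot ⟨hEq, by simp [Sym2.isDiag_iff_proj_eq, hne]⟩
  · rintro ⟨⟨hne', hmem⟩, hne⟩
    exact ⟨⟨hmem, hne⟩, fun h => hne' h.1⟩

lemma acyclic_mono {G H : SimpleGraph V} (h : G ≤ H) (hH : H.IsAcyclic) : G.IsAcyclic := by
  intro v c hc
  exact hH (c.mapLe h) (hc.mapLe h)

lemma ncomp_add_card_le (A : Finset (Sym2 V)) (hd : ∀ e ∈ A, ¬e.IsDiag)
    (ha : (toSG A).IsAcyclic) : ncomp A + A.card ≤ Fintype.card V := by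
  classical
  induction A using Finset.induction_on with
  | empty => simpa using (ncomp_empty (V := V)).le
  | insert _ _ he ih =>
    rename_i e A
    induction e using Sym2.ind with
    | _ u v =>
    have hne : u ≠ v := by
      have := hd s(u, v) (Finset.mem_insert_self _ _)
      simpa [Sym2.isDiag_iff_proj_eq] using this
    have hadj : (toSG (insert s(u, v) A)).Adj u v :=
      toSG_adj.mpr ⟨Finset.mem_insert_self _ _, hne⟩
    have hbridge := (SimpleGraph.isAcyclic_iff_forall_adj_isBridge.mp ha) hadj
    have hnr : ¬(toSG A).Reachable u v := by
      have h2 := (SimpleGraph.isBridge_iff.mp hbridge)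
      rwa [SimpleGraph.deleteEdges, toSG_sdiff_edge, Finset.erase_insert he] at h2
    have hlt : ncomp (insert s(u, v) A) < ncomp A :=
      ncomp_lt (adj_reach_of_subset (Finset.subset_insert _ _)) hnr hadj.reachable
    have hA : ncomp A + A.card ≤ Fintype.card V :=
      ih (fun e heA => hd e (Finset.mem_insert_of_mem heA))
        (acyclic_mono (toSG_mono (Finset.subset_insert _ _)) ha)
    rw [Finset.card_insert_of_notMem he]
    omega

lemma acyclic_insert {K : Finset (Sym2 V)} {u v : V}
    (hnr : ¬(toSG K).Reachable u v) (ha : (toSG K).IsAcyclic) :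
    (toSG (insert s(u, v) K)).IsAcyclic := by
  classical
  have hne : u ≠ v := fun h => hnr (h ▸ Reachable.refl u)
  have heK : s(u, v) ∉ K := fun h => hnr (toSG_adj.mpr ⟨h, hne⟩).reachable
  rw [SimpleGraph.isAcyclic_iff_forall_adj_isBridge]
  intro x y hxy
  have hxy' := hxy
  rw [toSG_adj, Finset.mem_insert] at hxy'
  obtain ⟨(he | hK), hnexy⟩ := hxy'
  · -- the new edge: deleting it gives a subgraph of toSG K
    refine SimpleGraph.isBridge_iff.mpr fun hr => ?_
    rw [SimpleGraph.deleteEdges, toSG_sdiff_edge] at hr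
    have : (toSG K).Reachable x y := by
      refine hr.mono (toSG_mono ?_)
      intro f hf
      rw [← he, Finset.mem_erase] at hf
      rcases Finset.mem_insert.mp hf.2 with h1 | h1
      · exact absurd h1 hf.1
      · exact h1
    rcases Sym2.eq_iff.mp he with ⟨rfl, rfl⟩ | ⟨rfl, rfl⟩
    · exact hnr this
    · exact hnr this.symm
  · -- an old edge
    have hfe : s(x, y) ≠ s(u, v) := fun h => heK (h ▸ hK)
    have hbridge := (SimpleGraph.isAcyclic_iff_forall_adj_isBridge.mp ha)
      (toSG_adj.mpr ⟨hK, hnexy⟩)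
    refine SimpleGraph.isBridge_iff.mpr fun hr => ?_
    rw [SimpleGraph.deleteEdges, toSG_sdiff_edge] at hr
    have hswap : (insert s(u, v) K).erase s(x, y) = insert s(u, v) (K.erase s(x, y)) := by
      rw [Finset.erase_insert_of_ne (fun h => hfe h.symm)]
    rw [hswap] at hr
    have hbr2 : ¬(toSG (K.erase s(x, y))).Reachable x y := by
      have h2 := (SimpleGraph.isBridge_iff.mp hbridge)
      rwa [SimpleGraph.deleteEdges, toSG_sdiff_edge] at h2
    have hKe : ∀ a b, (toSG (K.erase s(x, y))).Reachable a b → (toSG K).Reachable a b :=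
      fun a b h => h.mono (toSG_mono (Finset.erase_subset _ _))
    have hadjxyK : (toSG K).Reachable x y := (toSG_adj.mpr ⟨hK, hnexy⟩).reachable
    rcases reach_insert_cases hr with h1 | ⟨h1, h2⟩ | ⟨h1, h2⟩
    · exact hbr2 h1
    · -- x ~ u, v ~ y in K.erase xy ⇒ u ~ v in K : u ~ x ~ y ~ v? no: u~x, x~y edge, y~v
      exact hnr (((hKe _ _ h1).symm.trans hadjxyK).trans (hKe _ _ h2).symm)
    · exact hnr (((hKe _ _ h2).trans hadjxyK.symm).trans (hKe _ _ h1))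

lemma ncomp_eq_one {A : Finset (Sym2 V)} (h : (toSG A).Connected) : ncomp A = 1 := by
  have hsub := h.preconnected.subsingleton_connectedComponent
  have hne : Nonempty (toSG A).ConnectedComponent := by
    obtain ⟨v⟩ := h.nonempty
    exact ⟨(toSG A).connectedComponentMk v⟩
  rw [ncomp, Nat.card_eq_one_iff_unique]
  exact ⟨hsub, hne⟩

lemma edist_eq_top {H : Finset (Sym2 V)} {w : Sym2 V → ℝ} {u v : V}
    (h : ¬(toSG H).Reachable u v) : edist H w s(u, v) = ⊤ := by
  refine sInf_eq_top.mpr ?_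
  rintro x ⟨a, b, p, hab, rfl⟩
  rcases Sym2.eq_iff.mp hab with ⟨rfl, rfl⟩ | ⟨rfl, rfl⟩
  · exact absurd (⟨p⟩ : (toSG H).Reachable _ _) h
  · exact absurd (Reachable.symm (⟨p⟩ : (toSG H).Reachable _ _)) h

lemma edist_diag_le_zero {H : Finset (Sym2 V)} {w : Sym2 V → ℝ} {v : V} :
    edist H w s(v, v) ≤ 0 := by
  refine sInf_le ⟨v, v, Walk.nil, rfl, ?_⟩
  simp [walkWeight]

/-- `connE K e` : every representation of `e` has reachable endpoints in `toSG K`. -/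
def connE (K : Finset (Sym2 V)) (e : Sym2 V) : Prop :=
  ∀ u v : V, e = s(u, v) → (toSG K).Reachable u v

lemma connE_of_diag {K : Finset (Sym2 V)} {e : Sym2 V} (h : e.IsDiag) : connE K e := by
  induction e using Sym2.ind with
  | _ a b =>
    intro u v huv
    rcases Sym2.eq_iff.mp huv.symm with ⟨rfl, rfl⟩ | ⟨rfl, rfl⟩ <;>
      simp_all [Sym2.isDiag_iff_proj_eq] <;> exact Reachable.refl _

lemma connE_of_mem {K : Finset (Sym2 V)} {e : Sym2 V} (h : e ∈ K) : connE K e := by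
  by_cases hd : e.IsDiag
  · exact connE_of_diag hd
  · intro u v huv
    subst huv
    have hne : u ≠ v := by simpa [Sym2.isDiag_iff_proj_eq] using hd
    exact (toSG_adj.mpr ⟨h, hne⟩).reachable

lemma connE_mono {K K' : Finset (Sym2 V)} {e : Sym2 V} (h : connE K e) (hs : K ⊆ K') :
    connE K' e := fun u v huv => (h u v huv).mono (toSG_mono hs)

lemma not_connE_elim {K : Finset (Sym2 V)} {e : Sym2 V} (h : ¬connE K e) :
    ∃ u v : V, e = s(u, v) ∧ ¬(toSG K).Reachable u v := by
  rw [connE] at h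
  push_neg at h
  exact h

open Classical in
noncomputable def kruskalList (w : Sym2 V → ℝ) :
    List (Sym2 V) → Finset (Sym2 V) → Finset (Sym2 V)
  | [], K => K
  | e :: l, K => kruskalList w l (if connE K e then K else insert e K)

variable {w : Sym2 V → ℝ} {t : ℝ}

lemma kruskal_append (l1 l2 : List (Sym2 V)) (K : Finset (Sym2 V)) :
    kruskalList w (l1 ++ l2) K = kruskalList w l2 (kruskalList w l1 K) := by
  induction l1 generalizing K with
  | nil => simp [kruskalList]
  | cons e l ih => simp [kruskalList, ih]

lemma kruskal_start_subset (l : List (Sym2 V)) (K : Finset (Sym2 V)) :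
    K ⊆ kruskalList w l K := by
  induction l generalizing K with
  | nil => simp [kruskalList]
  | cons e l ih =>
    rw [kruskalList]
    refine subset_trans ?_ (ih _)
    split_ifs
    · exact subset_rfl
    · exact Finset.subset_insert _ _

lemma kruskal_subset_union (l : List (Sym2 V)) (K : Finset (Sym2 V)) :
    kruskalList w l K ⊆ K ∪ l.toFinset := by
  induction l generalizing K with
  | nil => simp [kruskalList]
  | cons e l ih =>
    rw [kruskalList]
    refine subset_trans (ih _) ?_
    split_ifs
    · intro x hx
      rcases Finset.mem_union.mp hx with h | h
      · exact Finset.mem_union_left _ h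
      · simp_all
    · intro x hx
      rcases Finset.mem_union.mp hx with h | h
      · rcases Finset.mem_insert.mp h with h | h
        · simp [h]
        · exact Finset.mem_union_left _ h
      · simp_all

lemma kruskal_connE_all (l : List (Sym2 V)) (K : Finset (Sym2 V)) :
    ∀ e ∈ l, connE (kruskalList w l K) e := by
  induction l generalizing K with
  | nil => simp
  | cons f l ih =>
    intro e he
    rw [kruskalList]
    rcases List.mem_cons.mp he with rfl | he
    · by_cases hc : connE K e
      · exact connE_mono (by rw [if_pos hc]; exact hc) (kruskal_start_subset _ _)
      · rw [if_neg hc]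
        refine connE_mono ?_ (kruskal_start_subset _ _)
        exact connE_of_mem (Finset.mem_insert_self _ _)
    · exact ih _ e he

lemma kruskal_acyclic (l : List (Sym2 V)) (K : Finset (Sym2 V))
    (h : (toSG K).IsAcyclic) : (toSG (kruskalList w l K)).IsAcyclic := by
  induction l generalizing K with
  | nil => exact h
  | cons e l ih =>
    rw [kruskalList]
    refine ih _ ?_
    split_ifs with hc
    · exact h
    · obtain ⟨u, v, rfl, hnr⟩ := not_connE_elim hc
      exact acyclic_insert hnr h

lemma kruskal_nondiag (l : List (Sym2 V)) (K : Finset (Sym2 V))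
    (h : ∀ e ∈ K, ¬e.IsDiag) : ∀ e ∈ kruskalList w l K, ¬e.IsDiag := by
  induction l generalizing K with
  | nil => exact h
  | cons e l ih =>
    rw [kruskalList]
    refine ih _ ?_
    split_ifs with hc
    · exact h
    · intro f hf
      rcases Finset.mem_insert.mp hf with rfl | hf
      · exact fun hd => hc (connE_of_diag hd)
      · exact h f hf

lemma kruskal_ncomp (l : List (Sym2 V)) (K : Finset (Sym2 V)) :
    ncomp (kruskalList w l K) + (kruskalList w l K).card ≤ ncomp K + K.card := by
  induction l generalizing K with
  | nil => exact le_rfl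
  | cons e l ih =>
    rw [kruskalList]
    refine le_trans (ih _) ?_
    split_ifs with hc
    · exact le_rfl
    · obtain ⟨u, v, rfl, hnr⟩ := not_connE_elim hc
      have hne : u ≠ v := fun h => hnr (h ▸ Reachable.refl u)
      have hadj : (toSG (insert s(u, v) K)).Adj u v :=
        toSG_adj.mpr ⟨Finset.mem_insert_self _ _, hne⟩
      have hlt : ncomp (insert s(u, v) K) < ncomp K :=
        ncomp_lt (adj_reach_of_subset (Finset.subset_insert _ _)) hnr hadj.reachable
      have hmem : s(u, v) ∉ K := fun h => hnr (toSG_adj.mpr ⟨h, hne⟩).reachable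
      rw [Finset.card_insert_of_notMem hmem]
      omega

lemma kruskal_sim (l : List (Sym2 V)) (K Hc : Finset (Sym2 V))
    (hsub : K ⊆ Hc)
    (hiff : ∀ x y, (toSG K).Reachable x y ↔ (toSG Hc).Reachable x y) :
    kruskalList w l K ⊆ greedyList w t l Hc ∧
      (∀ x y, (toSG (kruskalList w l K)).Reachable x y ↔
        (toSG (greedyList w t l Hc)).Reachable x y) := by
  induction l generalizing K Hc with
  | nil => exact ⟨hsub, hiff⟩
  | cons e l ih =>
    rw [kruskalList, greedyList]
    by_cases hc : connE K e
    · rw [if_pos hc]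
      have hcH : connE Hc e := fun u v huv => (hiff u v).mp (hc u v huv)
      by_cases hg : ENNReal.ofReal (t * w e) < edist Hc w e
      · rw [if_pos hg]
        refine ih _ _ (hsub.trans (Finset.subset_insert _ _)) ?_
        intro x y
        rw [hiff x y]
        constructor
        · exact fun h => h.mono (toSG_mono (Finset.subset_insert _ _))
        · refine reach_of_adj_reach ?_
          intro a b hab
          rw [toSG_adj, Finset.mem_insert] at hab
          obtain ⟨(rfl | hmem), hne⟩ := hab
          · exact hcH a b rfl
          · exact (toSG_adj.mpr ⟨hmem, hne⟩).reachable
      · rw [if_neg hg]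
        exact ih _ _ hsub hiff
    · rw [if_neg hc]
      obtain ⟨u, v, rfl, hnr⟩ := not_connE_elim hc
      have hnrH : ¬(toSG Hc).Reachable u v := fun h => hnr ((hiff u v).mpr h)
      have hg : ENNReal.ofReal (t * w s(u, v)) < edist Hc w s(u, v) := by
        rw [edist_eq_top hnrH]
        exact ENNReal.ofReal_lt_top
      rw [if_pos hg]
      refine ih _ _ (Finset.insert_subset_insert _ hsub) ?_
      have key : ∀ (A B : Finset (Sym2 V)),
          (∀ x y, (toSG A).Reachable x y → (toSG B).Reachable x y) →
          ∀ x y, (toSG (insert s(u, v) A)).Reachable x y →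
            (toSG (insert s(u, v) B)).Reachable x y := by
        intro A B hri x y
        refine reach_of_adj_reach ?_
        intro a b hab
        rw [toSG_adj, Finset.mem_insert] at hab
        obtain ⟨(he | hmem), hne⟩ := hab
        · exact (toSG_adj.mpr ⟨by simp [he], hne⟩).reachable
        · exact (hri a b (toSG_adj.mpr ⟨hmem, hne⟩).reachable).mono
            (toSG_mono (Finset.subset_insert _ _))
      intro x y
      constructor
      · exact key K Hc (fun a b h => (hiff a b).mp h) x y
      · exact key Hc K (fun a b h => (hiff a b).mpr h) x y

lemma greedy_subset_union (l : List (Sym2 V)) (Hc : Finset (Sym2 V)) :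
    greedyList w t l Hc ⊆ Hc ∪ l.toFinset := by
  induction l generalizing Hc with
  | nil => simp [greedyList]
  | cons e l ih =>
    rw [greedyList]
    refine subset_trans (ih _) ?_
    split_ifs
    · intro x hx
      rcases Finset.mem_union.mp hx with h | h
      · rcases Finset.mem_insert.mp h with h | h
        · simp [h]
        · exact Finset.mem_union_left _ h
      · simp_all
    · intro x hx
      rcases Finset.mem_union.mp hx with h | h
      · exact Finset.mem_union_left _ h
      · simp_all

lemma toSG_filter_nondiag (A : Finset (Sym2 V)) :
    toSG (A.filter (fun e => ¬e.IsDiag)) = toSG A := by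
  ext x y
  simp only [toSG_adj, Finset.mem_filter]
  constructor
  · rintro ⟨⟨h, _⟩, hne⟩; exact ⟨h, hne⟩
  · rintro ⟨h, hne⟩
    exact ⟨⟨h, by simp [Sym2.isDiag_iff_proj_eq, hne]⟩, hne⟩

lemma tree_card {A : Finset (Sym2 V)} (h : (toSG A).IsTree)
    (hd : ∀ e ∈ A, ¬e.IsDiag) : A.card + 1 = Fintype.card V := by
  classical
  letI : Fintype (toSG A).edgeSet := Fintype.ofFinite _
  have hcard := h.card_edgeFinset
  have heq : (toSG A).edgeFinset = A := by
    ext e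
    rw [SimpleGraph.mem_edgeFinset]
    rw [show (toSG A).edgeSet = ↑A \ {e : Sym2 V | e.IsDiag} from
      SimpleGraph.edgeSet_fromEdgeSet _]
    constructor
    · rintro ⟨h1, _⟩; exact_mod_cast h1
    · intro h1; exact ⟨h1, hd e h1⟩
  rwa [heq] at hcard

lemma kruskal_min {E T' : Finset (Sym2 V)} {l : List (Sym2 V)} (hnd : l.Nodup)
    (hmem : ∀ e, e ∈ l ↔ e ∈ E) (hsort : l.Pairwise (fun a b => w a ≤ w b))
    (hw : ∀ e ∈ E, 0 < w e)
    (hZtree : (toSG (kruskalList w l ∅)).IsTree)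
    (hT'E : T' ⊆ E) (hT : (toSG T').IsTree) :
    gweight w (kruskalList w l ∅) ≤ gweight w T' := by
  classical
  set Z := kruskalList w l (∅ : Finset (Sym2 V)) with hZdef
  set n := Fintype.card V with hn
  set T'' : Finset (Sym2 V) := T'.filter (fun e => ¬e.IsDiag) with hT''
  have hT''sub : T'' ⊆ T' := Finset.filter_subset _ _
  have hT''nd : ∀ e ∈ T'', ¬e.IsDiag := fun e he => (Finset.mem_filter.mp he).2
  have hT''g : toSG T'' = toSG T' := toSG_filter_nondiag T'
  have hT''tree : (toSG T'').IsTree := by rw [hT''g]; exact hT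
  have hwle : gweight w T'' ≤ gweight w T' :=
    Finset.sum_le_sum_of_subset_of_nonneg hT''sub (fun e he _ => (hw e (hT'E he)).le)
  have hZnd : ∀ e ∈ Z, ¬e.IsDiag := kruskal_nondiag l ∅ (by simp)
  have hZE : Z ⊆ E := by
    intro e he
    have := kruskal_subset_union (w := w) l ∅ he
    simp only [Finset.empty_union, List.mem_toFinset] at this
    exact (hmem e).mp this
  have hZcard : Z.card + 1 = n := tree_card hZtree hZnd
  have hTcard : T''.card + 1 = n := tree_card hT''tree hT''nd
  -- the two filtered lists
  set zl := l.filter (fun e => decide (e ∈ Z)) with hzl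
  set tl := l.filter (fun e => decide (e ∈ T'')) with htl
  have zl_nodup : zl.Nodup := hnd.filter _
  have tl_nodup : tl.Nodup := hnd.filter _
  have zl_toF : zl.toFinset = Z := by
    ext e
    simp only [hzl, List.mem_toFinset, List.mem_filter, decide_eq_true_eq]
    exact ⟨fun h => h.2, fun h => ⟨(hmem e).mpr (hZE h), h⟩⟩
  have tl_toF : tl.toFinset = T'' := by
    ext e
    simp only [htl, List.mem_toFinset, List.mem_filter, decide_eq_true_eq]
    exact ⟨fun h => h.2, fun h => ⟨(hmem e).mpr (hT'E (hT''sub h)), h⟩⟩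
  have zl_len : zl.length = Z.card := by
    rw [← zl_toF, List.card_toFinset, List.Nodup.dedup zl_nodup]
  have tl_len : tl.length = T''.card := by
    rw [← tl_toF, List.card_toFinset, List.Nodup.dedup tl_nodup]
  have len_eq : zl.length = tl.length := by omega
  have tl_sorted : tl.Pairwise (fun a b => w a ≤ w b) := hsort.filter _
  -- pointwise comparison
  have key : ∀ i (hi : i < zl.length) (hi' : i < tl.length),
      w (zl.get ⟨i, hi⟩) ≤ w (tl.get ⟨i, hi'⟩) := by
    intro i hi hi'
    by_contra hlt
    push_neg at hlt
    set z := zl.get ⟨i, hi⟩ with hz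
    have hz_mem : z ∈ zl := List.get_mem zl ⟨i, hi⟩
    have hzZ : z ∈ Z := by
      have := hz_mem; rw [hzl, List.mem_filter, decide_eq_true_eq] at this
      exact this.2
    have hz_l : z ∈ l := by
      have := hz_mem; rw [hzl, List.mem_filter] at this; exact this.1
    obtain ⟨l1, l2, hsplit⟩ := List.append_of_mem hz_l
    have hl_nodup : (l1 ++ z :: l2).Nodup := by rwa [hsplit] at hnd
    set F := kruskalList w l1 (∅ : Finset (Sym2 V)) with hF
    have hZF : Z = kruskalList w (z :: l2) F := by
      rw [hZdef, hsplit, kruskal_append]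
    have hFsubZ : F ⊆ Z := by rw [hZF]; exact kruskal_start_subset _ _
    have hFsubl1 : ∀ f ∈ F, f ∈ l1 := by
      intro f hf
      have := kruskal_subset_union (w := w) l1 ∅ hf
      simpa using this
    have hZint : ∀ f ∈ Z, f ∈ l1 → f ∈ F := by
      intro f hfZ hfl1
      have hsub := kruskal_subset_union (w := w) (z :: l2) F
      rw [← hZF] at hsub
      rcases Finset.mem_union.mp (hsub hfZ) with h | h
      · exact h
      · exfalso
        have hfzl2 : f ∈ z :: l2 := by simpa using h
        exact (List.disjoint_of_nodup_append hl_nodup) hfl1 hfzl2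
    set A' := l1.filter (fun e => decide (e ∈ Z)) with hA'
    have hFA' : F = A'.toFinset := by
      ext f
      simp only [hA', List.mem_toFinset, List.mem_filter, decide_eq_true_eq]
      exact ⟨fun h => ⟨hFsubl1 f h, hFsubZ h⟩, fun h => hZint f h.2 h.1⟩
    have l1_nodup : l1.Nodup := (List.nodup_append.mp hl_nodup).1
    have hFcard : F.card = A'.length := by
      rw [hFA', List.card_toFinset, List.Nodup.dedup (l1_nodup.filter _)]
    -- zl splits as A' ++ z :: B'
    set B' := l2.filter (fun e => decide (e ∈ Z)) with hB'
    have hzl_split : zl = A' ++ z :: B' := by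
      rw [hzl, hsplit, List.filter_append, List.filter_cons]
      simp [hzZ]
      rfl
    -- index identification
    have hiA' : i = A'.length := by
      have hlen : zl.length = A'.length + 1 + B'.length := by
        rw [hzl_split]; simp [List.length_append]; omega
      have hA'lt : A'.length < zl.length := by omega
      have hget : zl[A'.length]'hA'lt = z := by
        rw [List.getElem_of_eq hzl_split hA'lt]
        rw [List.getElem_append_right (le_refl A'.length)]
        simp
      have hgi : zl[A'.length]'hA'lt = zl[i]'hi := by
        rw [hget, hz, List.get_eq_getElem]
      exact ((zl_nodup.getElem_inj_iff).mp hgi).symm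
    -- elements of tl up to index i lie in l1
    have htl_mem_l1 : ∀ j (hj : j < tl.length), j ≤ i → tl.get ⟨j, hj⟩ ∈ l1 := by
      intro j hj hji
      have hwj : w (tl.get ⟨j, hj⟩) ≤ w (tl.get ⟨i, hi'⟩) := by
        rcases Nat.eq_or_lt_of_le hji with rfl | hlt2
        · exact le_rfl
        · exact tl_sorted.rel_get_of_lt hlt2
      have hwz : w (tl.get ⟨j, hj⟩) < w z := lt_of_le_of_lt hwj hlt
      have hmem' : tl.get ⟨j, hj⟩ ∈ l := by
        have := List.get_mem tl ⟨j, hj⟩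
        exact List.mem_of_mem_filter this
      rw [hsplit] at hmem'
      rcases List.mem_append.mp hmem' with h | h
      · exact h
      · exfalso
        rcases List.mem_cons.mp h with heq | h2
        · rw [heq] at hwz; exact lt_irrefl _ hwz
        · have hs := hsort
          rw [hsplit] at hs
          have hpw := (List.pairwise_append.mp hs).2.1
          have := (List.pairwise_cons.mp hpw).1 _ h2
          linarith
    -- the finset of the first i+1 edges of tl
    have htk_len : (tl.take (i + 1)).length = i + 1 := by
      rw [List.length_take]; omega
    have htk_nodup : (tl.take (i + 1)).Nodup := tl_nodup.sublist (List.take_sublist _ _)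
    set A2 := (tl.take (i + 1)).toFinset with hA2
    have hA2card : A2.card = i + 1 := by
      rw [hA2, List.card_toFinset, List.Nodup.dedup htk_nodup, htk_len]
    have htk_sub_tl : ∀ e ∈ tl.take (i + 1), e ∈ tl :=
      fun e he => (List.take_sublist _ _).mem he
    have hA2T'' : A2 ⊆ T'' := by
      intro e he
      rw [hA2, List.mem_toFinset] at he
      have := htk_sub_tl e he
      rw [htl, List.mem_filter, decide_eq_true_eq] at this
      exact this.2
    have hA2l1 : ∀ e ∈ A2, e ∈ l1 := by
      intro e he
      rw [hA2, List.mem_toFinset] at he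
      obtain ⟨j, hj, hje⟩ := List.mem_iff_getElem.mp he
      have hj' : j < tl.length := by
        rw [htk_len] at hj; omega
      have hje' : tl[j]'hj' = e := by
        rw [← hje, List.getElem_take]
      have h6 := htl_mem_l1 j hj' (by rw [htk_len] at hj; omega)
      rw [List.get_eq_getElem] at h6
      rwa [hje'] at h6
    -- counting
    have hconnF : ∀ e ∈ l1, connE F e := kruskal_connE_all l1 ∅
    have h1 : ncomp A2 + A2.card ≤ n :=
      ncomp_add_card_le A2 (fun e he => hT''nd e (hA2T'' he))
        (acyclic_mono (toSG_mono hA2T'') hT''tree.IsAcyclic)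
    have h2 : ncomp F ≤ ncomp A2 := by
      refine ncomp_le ?_
      intro x y hadj
      rw [toSG_adj] at hadj
      exact hconnF _ (hA2l1 _ hadj.1) x y rfl
    have h3 : n ≤ ncomp F + F.card := card_le_ncomp_add_card F
    have hFi : F.card = i := by rw [hFcard, ← hiA']
    omega
  -- sum up
  have hforall : List.Forall₂ (fun a b : ℝ => a ≤ b) (zl.map w) (tl.map w) := by
    rw [List.forall₂_map_left_iff, List.forall₂_map_right_iff]
    rw [List.forall₂_iff_get]
    exact ⟨len_eq, fun i h1 h2 => key i h1 h2⟩
  have hsum : (zl.map w).sum ≤ (tl.map w).sum := List.Forall₂.sum_le_sum hforall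
  have e1 : gweight w Z = (zl.map w).sum := by
    rw [gweight, ← zl_toF, List.sum_toFinset _ zl_nodup]
  have e2 : gweight w T'' = (tl.map w).sum := by
    rw [gweight, ← tl_toF, List.sum_toFinset _ tl_nodup]
  calc gweight w Z = (zl.map w).sum := e1
    _ ≤ (tl.map w).sum := hsum
    _ = gweight w T'' := e2.symm
    _ ≤ gweight w T' := hwle

end AuxGreedyMST

/-- The greedy `t`-spanner `H` of a weighted graph `G` contains
all edges of some minimum spanning tree of `G`; consequently `G` and `H` share a
common MST. -/
theorem greedy_contains_mst (E H : Finset (Sym2 V)) (w : Sym2 V → ℝ) (t : ℝ)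
    (ht : 1 ≤ t) (hw : ∀ e ∈ E, 0 < w e) (hconn : (toSG E).Connected)
    (hH : IsGreedy w t E H) :
    ∃ Z : Finset (Sym2 V), Z ⊆ H ∧ IsMST w E Z ∧ IsMST w H Z := by

  classical
  obtain ⟨l, hnd, hmem, hsort, hgreedy⟩ := hH
  set Z := kruskalList w l (∅ : Finset (Sym2 V)) with hZdef
  have hsim := kruskal_sim (w := w) (t := t) l ∅ ∅ subset_rfl (fun _ _ => Iff.rfl)
  have hZH : Z ⊆ H := by rw [← hgreedy]; exact hsim.1
  have hHE : H ⊆ E := by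
    rw [← hgreedy]
    intro e he
    have := greedy_subset_union (w := w) (t := t) l ∅ he
    simp only [Finset.empty_union, List.mem_toFinset] at this
    exact (hmem e).mp this
  have hZE : Z ⊆ E := by
    intro e he
    have := kruskal_subset_union (w := w) l ∅ he
    simp only [Finset.empty_union, List.mem_toFinset] at this
    exact (hmem e).mp this
  have hempty : toSG (∅ : Finset (Sym2 V)) = ⊥ := by simp [toSG]
  have hZacyc : (toSG Z).IsAcyclic :=
    kruskal_acyclic l ∅ (by rw [hempty]; exact SimpleGraph.isAcyclic_bot)
  have hZconn : (toSG Z).Connected := by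
    have : Nonempty V := hconn.nonempty
    refine SimpleGraph.Connected.mk ?_
    intro x y
    refine reach_of_adj_reach ?_ (hconn.preconnected x y)
    intro a b hab
    rw [toSG_adj] at hab
    exact kruskal_connE_all l ∅ _ ((hmem _).mpr hab.1) a b rfl
  have hZtree : (toSG Z).IsTree := ⟨hZconn, hZacyc⟩
  have hmin : ∀ T' ⊆ E, (toSG T').IsTree → gweight w Z ≤ gweight w T' :=
    fun T' hT'E hT => kruskal_min hnd hmem hsort hw hZtree hT'E hT
  exact ⟨Z, hZH, ⟨hZE, hZtree, hmin⟩,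
    ⟨hZH, hZtree, fun T' hT'H hT => hmin T' (hT'H.trans hHE) hT⟩⟩
end

section
/- Weight optimality of the greedy spanner against spanners of its induced metric: Let M be a metric space, t ≥ 1, and H the greedy t-spanner of M. Then for every t-spanner H' of the metric space M_H induced by H, w(H) ≤ w(H'). -/
open SimpleGraph
open scoped ENNReal

variable {V : Type*} [Fintype V] [DecidableEq V]

section Aux
set_option linter.unusedSectionVars false

open SimpleGraph
open scoped ENNReal

namespace GreedyOpt

variable {V : Type*} [Fintype V] [DecidableEq V]
variable {w : Sym2 V → ℝ} {t : ℝ} {E E' S H H' : Finset (Sym2 V)} {G G' : SimpleGraph V}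
variable {u v x a b : V}

lemma toSG_adj : (toSG E).Adj a b ↔ s(a,b) ∈ E ∧ a ≠ b := by
  simp [toSG, SimpleGraph.fromEdgeSet_adj]

lemma walkWeight_nil : walkWeight w (Walk.nil : G.Walk u u) = 0 := by simp [walkWeight]

lemma walkWeight_cons (h : G.Adj u x) (p : G.Walk x v) :
    walkWeight w (Walk.cons h p) = ENNReal.ofReal (w s(u,x)) + walkWeight w p := by
  simp [walkWeight]

lemma walkWeight_append (p : G.Walk u x) (q : G.Walk x v) :
    walkWeight w (p.append q) = walkWeight w p + walkWeight w q := by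
  simp [walkWeight, Walk.edges_append]

lemma walkWeight_reverse (p : G.Walk u v) :
    walkWeight w p.reverse = walkWeight w p := by
  simp [walkWeight, Walk.edges_reverse, List.map_reverse, List.sum_reverse]

lemma walkWeight_transfer (p : G.Walk u v) (h : ∀ e ∈ p.edges, e ∈ G'.edgeSet) :
    walkWeight w (p.transfer G' h) = walkWeight w p := by
  simp [walkWeight, Walk.edges_transfer]

lemma edge_mem_of_mem_edges {p : (toSG E).Walk u v} {f : Sym2 V} (hf : f ∈ p.edges) :
    f ∈ E ∧ ¬ f.IsDiag := by
  have := p.edges_subset_edgeSet hf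
  rw [toSG, SimpleGraph.edgeSet_fromEdgeSet] at this
  exact ⟨this.1, this.2⟩

/-- transfer a walk into a larger edge set -/
def walkMono (hEE : E ⊆ E') (p : (toSG E).Walk u v) : (toSG E').Walk u v :=
  p.transfer (toSG E') (by
    intro e he
    have h2 := edge_mem_of_mem_edges he
    rw [toSG, SimpleGraph.edgeSet_fromEdgeSet]
    exact ⟨hEE h2.1, h2.2⟩)

lemma walkWeight_walkMono (hEE : E ⊆ E') (p : (toSG E).Walk u v) :
    walkWeight w (walkMono hEE p) = walkWeight w p := walkWeight_transfer _ _

lemma edges_walkMono (hEE : E ⊆ E') (p : (toSG E).Walk u v) :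
    (walkMono hEE p).edges = p.edges := Walk.edges_transfer _ _

lemma edist_le_walk (p : (toSG E).Walk a b) : edist E w s(a,b) ≤ walkWeight w p :=
  sInf_le ⟨a, b, p, rfl, rfl⟩

lemma le_edist {c : ℝ≥0∞} {e : Sym2 V}
    (h : ∀ (u' v' : V) (p : (toSG E).Walk u' v'), e = s(u',v') → c ≤ walkWeight w p) :
    c ≤ edist E w e :=
  le_sInf (by rintro x ⟨u', v', p, he, rfl⟩; exact h u' v' p he)

lemma edist_mono (hEE : E ⊆ E') (e : Sym2 V) : edist E' w e ≤ edist E w e := by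
  apply le_sInf
  rintro x ⟨u', v', p, he, rfl⟩
  rw [← walkWeight_walkMono (w := w) hEE p]
  exact sInf_le ⟨u', v', _, he, rfl⟩

lemma edist_diag (a : V) : edist E w s(a,a) = 0 := by
  refine le_antisymm ?_ zero_le
  have := edist_le_walk (w := w) (Walk.nil : (toSG E).Walk a a)
  simpa [walkWeight_nil] using this

lemma sym2_eq_of_mem_mem {f : Sym2 V} (hnd : ¬ f.IsDiag) (ha : a ∈ f) (hb : b ∈ f)
    (hab : a ≠ b) : f = s(a,b) := by
  induction f using Sym2.ind with
  | _ x y =>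
    rw [Sym2.mem_iff] at ha hb
    rw [Sym2.mk_isDiag_iff] at hnd
    obtain ha | ha := ha <;> obtain hb | hb := hb <;> subst ha <;> subst hb <;>
      first | rfl | exact absurd rfl hab | exact absurd rfl hnd | exact Sym2.eq_swap.symm

lemma edist_eq_sInf_pair (E : Finset (Sym2 V)) (w : Sym2 V → ℝ) (a b : V) :
    edist E w s(a,b) = sInf {x | ∃ p : (toSG E).Walk a b, walkWeight w p = x} := by
  apply le_antisymm
  · exact le_sInf (by rintro x ⟨p, rfl⟩; exact edist_le_walk p)
  · apply le_sInf
    rintro x ⟨u', v', p, he, rfl⟩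
    rw [Sym2.eq_iff] at he
    obtain ⟨rfl, rfl⟩ | ⟨rfl, rfl⟩ := he
    · exact sInf_le ⟨p, rfl⟩
    · exact sInf_le ⟨p.reverse, walkWeight_reverse p⟩

lemma toFinset_sum_le (f : Sym2 V → ℝ≥0∞) :
    ∀ l : List (Sym2 V), ∑ e ∈ l.toFinset, f e ≤ (l.map f).sum := by
  intro l
  induction l with
  | nil => simp
  | cons a l ih =>
    rw [List.toFinset_cons, List.map_cons, List.sum_cons]
    by_cases h : a ∈ l.toFinset
    · rw [Finset.insert_eq_self.2 h]; exact le_add_left ih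
    · rw [Finset.sum_insert h]; exact add_le_add le_rfl ih

lemma nodup_map_sum_eq (f : Sym2 V → ℝ≥0∞) :
    ∀ {l : List (Sym2 V)}, l.Nodup → (l.map f).sum = ∑ e ∈ l.toFinset, f e := by
  intro l
  induction l with
  | nil => simp
  | cons a l ih =>
    intro h
    rw [List.nodup_cons] at h
    rw [List.toFinset_cons, List.map_cons, List.sum_cons,
      Finset.sum_insert (by simpa using h.1), ih h.2]

lemma walkWeight_bypass_le (p : G.Walk u v) : walkWeight w p.bypass ≤ walkWeight w p := by
  rw [walkWeight, nodup_map_sum_eq _ p.bypass_isPath.edges_nodup]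
  refine le_trans (Finset.sum_le_sum_of_subset ?_) (toFinset_sum_le _ p.edges)
  intro e he
  rw [List.mem_toFinset] at he ⊢
  exact p.edges_bypass_subset he

lemma edist_attained (w : Sym2 V → ℝ) (E : Finset (Sym2 V)) (a b : V)
    (hne : edist E w s(a,b) ≠ ⊤) :
    ∃ p : (toSG E).Walk a b, walkWeight w p = edist E w s(a,b) := by
  classical
  rw [edist_eq_sInf_pair] at hne ⊢
  set S := {x | ∃ p : (toSG E).Walk a b, walkWeight w p = x} with hS
  have hSne : S.Nonempty := by
    by_contra h
    rw [Set.not_nonempty_iff_eq_empty] at h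
    rw [h, sInf_empty] at hne
    exact hne rfl
  obtain ⟨x0, p0, hp0⟩ := hSne
  haveI : DecidableRel (toSG E).Adj := Classical.decRel _
  set P : Set ℝ≥0∞ := (fun q : (toSG E).Path a b => walkWeight w q.1) '' Set.univ with hP
  have hPfin : P.Finite := Set.finite_univ.image _
  have hPS : P ⊆ S := by rintro x ⟨q, -, rfl⟩; exact ⟨q.1, rfl⟩
  have h1 : sInf S ≤ sInf P := le_sInf fun x hx => sInf_le (hPS hx)
  have h2 : sInf P ≤ sInf S := by
    apply le_sInf
    rintro x ⟨p, rfl⟩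
    exact le_trans (sInf_le ⟨⟨p.bypass, p.bypass_isPath⟩, trivial, rfl⟩) (walkWeight_bypass_le p)
  have heq : sInf S = sInf P := le_antisymm h1 h2
  have hPne : P.Nonempty := ⟨_, ⟨⟨p0.bypass, p0.bypass_isPath⟩, trivial, rfl⟩⟩
  have hmem := hPne.csInf_mem hPfin
  rw [heq]
  obtain ⟨q, -, hq⟩ := hmem
  exact ⟨q.1, hq⟩

end GreedyOpt
end Aux
section Aux2
set_option linter.unusedSectionVars false
open SimpleGraph
open scoped ENNReal
namespace GreedyOpt

variable {V : Type*} [Fintype V] [DecidableEq V]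
variable {w : Sym2 V → ℝ} {t : ℝ} {E E' S H H' : Finset (Sym2 V)} {G G' : SimpleGraph V}
variable {u v x a b : V}

lemma exists_split_first {f : Sym2 V} :
    ∀ {u : V} (p : G.Walk u v), f ∈ p.edges →
    ∃ (a b : V) (A : G.Walk u a) (B : G.Walk b v), s(a,b) = f ∧ f ∉ A.edges ∧
      walkWeight w p = walkWeight w A + ENNReal.ofReal (w f) + walkWeight w B := by
  intro u p
  induction p with
  | nil => simp
  | @cons u x v h q ih =>
    intro hf
    rw [Walk.edges_cons, List.mem_cons] at hf
    by_cases hfe : f = s(u,x)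
    · refine ⟨u, x, Walk.nil, q, hfe.symm, by simp, ?_⟩
      rw [walkWeight_cons, walkWeight_nil, hfe]
      ring
    · have hq : f ∈ q.edges := hf.resolve_left hfe
      obtain ⟨a, b, A, B, h1, h2, h3⟩ := ih hq
      refine ⟨a, b, Walk.cons h A, B, h1, ?_, ?_⟩
      · rw [Walk.edges_cons, List.mem_cons]
        rintro (h' | h')
        · exact hfe h'
        · exact h2 h'
      · rw [walkWeight_cons, h3, walkWeight_cons]; ring

/-- an `f`-avoiding walk in `toSG (insert f S)` transfers to `toSG S` -/
def transferOut {f : Sym2 V} (p : (toSG (insert f S)).Walk u v) (hp : f ∉ p.edges) :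
    (toSG S).Walk u v :=
  p.transfer (toSG S) (by
    intro e he
    have h2 := edge_mem_of_mem_edges he
    rw [toSG, SimpleGraph.edgeSet_fromEdgeSet]
    refine ⟨?_, h2.2⟩
    rcases Finset.mem_insert.mp h2.1 with h | h
    · exact absurd (h ▸ he) hp
    · exact h)

lemma walkWeight_transferOut {f : Sym2 V} (p : (toSG (insert f S)).Walk u v)
    (hp : f ∉ p.edges) : walkWeight w (transferOut p hp) = walkWeight w p :=
  walkWeight_transfer _ _

lemma surgery {f : Sym2 V} (P : (toSG (insert f S)).Walk u v) :
    (∃ P' : (toSG S).Walk u v, walkWeight w P' ≤ walkWeight w P) ∨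
    (∃ (a b : V) (A : (toSG S).Walk u a) (B : (toSG S).Walk b v),
      a ∈ f ∧ b ∈ f ∧
      walkWeight w A + ENNReal.ofReal (w f) + walkWeight w B ≤ walkWeight w P) := by
  by_cases hf : f ∈ P.edges
  · obtain ⟨a, b, A, B0, hab, hfA, hw1⟩ := exists_split_first P hf
    have haf : a ∈ f := hab ▸ Sym2.mem_mk_left a b
    have hbf : b ∈ f := hab ▸ Sym2.mem_mk_right a b
    by_cases hfB : f ∈ B0.edges
    · have hfBrev : f ∈ B0.reverse.edges := by rwa [Walk.edges_reverse, List.mem_reverse]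
      obtain ⟨c, d, C, D, hcd, hfC, hw2⟩ := exists_split_first B0.reverse hfBrev
      have hcf : c ∈ f := hcd ▸ Sym2.mem_mk_left c d
      right
      refine ⟨a, c, transferOut A hfA, (transferOut C hfC).reverse, haf, hcf, ?_⟩
      rw [walkWeight_reverse, walkWeight_transferOut, walkWeight_transferOut, hw1]
      have : walkWeight w B0 = walkWeight w C + ENNReal.ofReal (w f) + walkWeight w D := by
        rw [← walkWeight_reverse B0, hw2]
      rw [this]
      calc walkWeight w A + ENNReal.ofReal (w f) + walkWeight w C
          ≤ (walkWeight w A + ENNReal.ofReal (w f) + walkWeight w C) +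
            (ENNReal.ofReal (w f) + walkWeight w D) := le_add_of_nonneg_right zero_le
        _ = walkWeight w A + ENNReal.ofReal (w f) +
            (walkWeight w C + ENNReal.ofReal (w f) + walkWeight w D) := by ring
    · right
      refine ⟨a, b, transferOut A hfA, transferOut B0 hfB, haf, hbf, ?_⟩
      rw [walkWeight_transferOut, walkWeight_transferOut, hw1]
  · exact Or.inl ⟨transferOut P hf, le_of_eq (walkWeight_transferOut P hf)⟩

end GreedyOpt
end Aux2
section Aux3
set_option linter.unusedSectionVars false
open SimpleGraph
open scoped ENNReal
namespace GreedyOpt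

variable {V : Type*} [Fintype V] [DecidableEq V]
variable {w : Sym2 V → ℝ} {t : ℝ} {E E' S H H' : Finset (Sym2 V)}
variable {u v x a b : V}

lemma greedyList_nil (H0 : Finset (Sym2 V)) : greedyList w t [] H0 = H0 := rfl

lemma greedyList_cons (e : Sym2 V) (l : List (Sym2 V)) (H0 : Finset (Sym2 V)) :
    greedyList w t (e :: l) H0 =
      greedyList w t l
        (if ENNReal.ofReal (t * w e) < edist H0 w e then insert e H0 else H0) := rfl

lemma subset_greedyList : ∀ (l : List (Sym2 V)) (H0 : Finset (Sym2 V)),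
    H0 ⊆ greedyList w t l H0 := by
  intro l
  induction l with
  | nil => intro H0; rw [greedyList_nil]
  | cons e l ih =>
    intro H0
    rw [greedyList_cons]
    refine subset_trans ?_ (ih _)
    split_ifs with h
    · exact Finset.subset_insert _ _
    · exact subset_rfl

lemma greedyList_subset : ∀ (l : List (Sym2 V)) (H0 : Finset (Sym2 V)),
    greedyList w t l H0 ⊆ H0 ∪ l.toFinset := by
  intro l
  induction l with
  | nil => intro H0; rw [greedyList_nil]; exact Finset.subset_union_left
  | cons e l ih =>
    intro H0
    rw [greedyList_cons]
    refine subset_trans (ih _) ?_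
    intro g hg
    rw [Finset.mem_union] at hg
    rw [List.toFinset_cons, Finset.mem_union, Finset.mem_insert]
    rcases hg with hg | hg
    · split_ifs at hg with h
      · rcases Finset.mem_insert.mp hg with hg | hg
        · exact Or.inr (Or.inl hg)
        · exact Or.inl hg
      · exact Or.inl hg
    · exact Or.inr (Or.inr hg)

lemma greedy_spanner_aux (hw : ∀ e, 0 ≤ w e) (ht : 1 ≤ t) :
    ∀ (l : List (Sym2 V)) (H0 : Finset (Sym2 V)), (∀ e ∈ l, ¬ e.IsDiag) →
    ∀ f ∈ l, edist (greedyList w t l H0) w f ≤ ENNReal.ofReal (t * w f) := by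
  intro l
  induction l with
  | nil => intro H0 _ f hf; simp at hf
  | cons e l ih =>
    intro H0 hnd f hf
    rw [greedyList_cons]
    rcases List.mem_cons.mp hf with rfl | hf
    · -- f is the head
      set H1 := if ENNReal.ofReal (t * w f) < edist H0 w f then insert f H0 else H0 with hH1
      have key : edist H1 w f ≤ ENNReal.ofReal (t * w f) := by
        rw [hH1]
        split_ifs with h
        · have hfnd : ¬ f.IsDiag := hnd _ (List.mem_cons_self)
          clear hf hnd h hH1 ih
          induction f using Sym2.ind with
          | _ a b =>
            have hab : a ≠ b := by rwa [Sym2.mk_isDiag_iff] at hfnd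
            have hadj : (toSG (insert s(a,b) H0)).Adj a b :=
              toSG_adj.mpr ⟨Finset.mem_insert_self _ _, hab⟩
            have hle := edist_le_walk (w := w) (Walk.cons hadj Walk.nil)
            rw [walkWeight_cons, walkWeight_nil, add_zero] at hle
            refine le_trans hle (ENNReal.ofReal_le_ofReal ?_)
            exact le_mul_of_one_le_left (hw _) ht
        · exact not_lt.mp h
      exact le_trans (edist_mono (subset_greedyList l H1) f) key
    · exact ih _ (fun g hg => hnd g (List.mem_cons_of_mem _ hg)) f hf

lemma greedy_claimA (hw : ∀ e, 0 ≤ w e) (ht0 : 0 ≤ t) :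
    ∀ (l : List (Sym2 V)) (H0 : Finset (Sym2 V)),
      l.Nodup →
      l.Pairwise (fun a b => w a ≤ w b) →
      (∀ e ∈ l, ¬ e.IsDiag) →
      (∀ e ∈ l, e ∉ H0) →
      (∀ g ∈ H0, ¬ g.IsDiag) →
      (∀ g ∈ H0, ∀ e ∈ l, w g ≤ w e) →
      (∀ g ∈ H0, ENNReal.ofReal (t * w g) < edist (H0.erase g) w g) →
      ∀ g ∈ greedyList w t l H0,
        ENNReal.ofReal (t * w g) < edist ((greedyList w t l H0).erase g) w g := by
  intro l
  induction l with
  | nil => intro H0 _ _ _ _ _ _ hinv g hg; exact hinv g hg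
  | cons e l ih =>
    intro H0 hnd hsort hdiag hnotin hH0diag hwle hinv
    rw [greedyList_cons]
    rw [List.nodup_cons] at hnd
    rw [List.pairwise_cons] at hsort
    have hediag : ¬ e.IsDiag := hdiag e (List.mem_cons_self)
    have henotin : e ∉ H0 := hnotin e (List.mem_cons_self)
    set H1 := if ENNReal.ofReal (t * w e) < edist H0 w e then insert e H0 else H0 with hH1
    have hH1sub : H0 ⊆ H1 := by rw [hH1]; split_ifs; exacts [Finset.subset_insert _ _, subset_rfl]
    have hH1cases : H1 = H0 ∨
        (H1 = insert e H0 ∧ ENNReal.ofReal (t * w e) < edist H0 w e) := by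
      rw [hH1]; split_ifs with h; exacts [Or.inr ⟨rfl, h⟩, Or.inl rfl]
    apply ih H1 hnd.2 hsort.2 (fun g hg => hdiag g (List.mem_cons_of_mem _ hg))
    · -- tail not in H1
      intro f hf
      rcases hH1cases with h | ⟨h, -⟩ <;> rw [h]
      · exact hnotin f (List.mem_cons_of_mem _ hf)
      · rw [Finset.mem_insert]
        rintro (rfl | hmem)
        · exact hnd.1 hf
        · exact hnotin f (List.mem_cons_of_mem _ hf) hmem
    · -- nondiag
      intro g hg
      rcases hH1cases with h | ⟨h, -⟩ <;> rw [h] at hg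
      · exact hH0diag g hg
      · rcases Finset.mem_insert.mp hg with rfl | hg
        · exact hediag
        · exact hH0diag g hg
    · -- weight ordering
      intro g hg f hf
      rcases hH1cases with h | ⟨h, -⟩ <;> rw [h] at hg
      · exact hwle g hg f (List.mem_cons_of_mem _ hf)
      · rcases Finset.mem_insert.mp hg with rfl | hg
        · exact hsort.1 f hf
        · exact hwle g hg f (List.mem_cons_of_mem _ hf)
    · -- the main invariant for H1
      rcases hH1cases with h | ⟨h, hc⟩
      · rw [h]; exact hinv
      · rw [h]
        intro g hg
        rcases Finset.mem_insert.mp hg with rfl | hgH0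
        · rwa [Finset.erase_insert henotin]
        · -- g ∈ H0, g ≠ e
          have hge : e ≠ g := fun h' => henotin (h' ▸ hgH0)
          rw [Finset.erase_insert_of_ne hge]
          by_contra hcon
          rw [not_lt] at hcon
          -- hcon : edist (insert e (H0.erase g)) w g ≤ ofReal (t * w g)
          have hA := hinv g hgH0
          have hwge : w g ≤ w e := hwle g hgH0 e (List.mem_cons_self)
          -- pointwise bound
          set c : ℝ≥0∞ := min (edist (H0.erase g) w g + ENNReal.ofReal (w g))
            (edist H0 w e + ENNReal.ofReal (w e)) with hcdef
          have hgnd : ¬ g.IsDiag := hH0diag g hgH0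
          have hptwise : c - ENNReal.ofReal (w g) ≤ edist (insert e (H0.erase g)) w g := by
            apply le_edist
            intro u' v' P hg'
            rw [tsub_le_iff_right]
            have hu'v' : u' ≠ v' := by
              intro h'
              rw [hg', h', Sym2.mk_isDiag_iff] at hgnd
              exact hgnd rfl
            rcases surgery (w := w) P with ⟨P', hP'⟩ | ⟨α, β, A, B, hα, hβ, hle⟩
            · have : edist (H0.erase g) w g ≤ walkWeight w P' := by
                refine le_trans (sInf_le ⟨u', v', P', hg', rfl⟩) le_rfl
              refine le_trans (min_le_left _ _) ?_
              exact add_le_add (le_trans this hP') le_rfl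
            · by_cases hαβ : α = β
              · -- join A and B directly, avoiding e
                subst hαβ
                have : edist (H0.erase g) w g ≤ walkWeight w (A.append B) :=
                  sInf_le ⟨u', v', A.append B, hg', rfl⟩
                rw [walkWeight_append] at this
                refine le_trans (min_le_left _ _) (add_le_add ?_ le_rfl)
                refine le_trans this (le_trans ?_ hle)
                calc walkWeight w A + walkWeight w B
                    ≤ walkWeight w A + (ENNReal.ofReal (w e) + walkWeight w B) :=
                      add_le_add le_rfl (le_add_of_nonneg_left zero_le)
                  _ = walkWeight w A + ENNReal.ofReal (w e) + walkWeight w B :=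
                      (add_assoc _ _ _).symm
              · -- α ≠ β : both endpoints of e, gives an e-walk through the g-edge
                have heαβ : e = s(α, β) := sym2_eq_of_mem_mem hediag hα hβ hαβ
                -- build walk α → β in toSG H0 : A.reverse (α→u') + g-edge (u'→v') + B.reverse (v'→β)
                have hgadj : (toSG H0).Adj u' v' := by
                  rw [toSG_adj]
                  exact ⟨by rw [← hg']; exact hgH0, hu'v'⟩
                have hsub : H0.erase g ⊆ H0 := Finset.erase_subset _ _
                set R : (toSG H0).Walk α β :=
                  ((walkMono hsub A).reverse).append
                    (Walk.cons hgadj ((walkMono hsub B).reverse)) with hR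
                have hRw : walkWeight w R =
                    walkWeight w A + ENNReal.ofReal (w s(u',v')) + walkWeight w B := by
                  rw [hR, walkWeight_append, walkWeight_reverse, walkWeight_cons,
                    walkWeight_reverse, walkWeight_walkMono, walkWeight_walkMono]
                  ring
                have hE : edist H0 w e ≤ walkWeight w R := sInf_le ⟨α, β, R, heαβ, rfl⟩
                refine le_trans (min_le_right _ _) ?_
                calc edist H0 w e + ENNReal.ofReal (w e)
                    ≤ walkWeight w R + ENNReal.ofReal (w e) := add_le_add hE le_rfl
                  _ = walkWeight w A + ENNReal.ofReal (w e) + walkWeight w B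
                      + ENNReal.ofReal (w s(u',v')) := by rw [hRw]; ring
                  _ ≤ walkWeight w P + ENNReal.ofReal (w g) := by
                      rw [← hg']
                      exact add_le_add hle le_rfl
          -- now conclude
          have hkc : ENNReal.ofReal (w g) ≤ c := by
            refine le_min ?_ ?_
            · exact le_add_of_nonneg_left zero_le
            · exact le_trans (ENNReal.ofReal_le_ofReal hwge) (le_add_of_nonneg_left zero_le)
          have hcle : c ≤ ENNReal.ofReal (t * w g) + ENNReal.ofReal (w g) := by
            have := le_trans hptwise hcon
            rwa [tsub_le_iff_right] at this
          rcases min_cases (edist (H0.erase g) w g + ENNReal.ofReal (w g))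
              (edist H0 w e + ENNReal.ofReal (w e)) with ⟨hmin, -⟩ | ⟨hmin, -⟩
          · rw [hcdef, hmin] at hcle
            rw [ENNReal.add_le_add_iff_right ENNReal.ofReal_ne_top] at hcle
            exact absurd hcle (not_le.mpr hA)
          · rw [hcdef, hmin] at hcle
            have hstep : ENNReal.ofReal (t * w g) + ENNReal.ofReal (w g)
                ≤ ENNReal.ofReal (t * w e) + ENNReal.ofReal (w e) :=
              add_le_add (ENNReal.ofReal_le_ofReal (mul_le_mul_of_nonneg_left hwge ht0))
                (ENNReal.ofReal_le_ofReal hwge)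
            have hcle2 := le_trans hcle hstep
            rw [ENNReal.add_le_add_iff_right ENNReal.ofReal_ne_top] at hcle2
            exact absurd hcle2 (not_le.mpr hc)

end GreedyOpt
end Aux3
section Aux4
set_option linter.unusedSectionVars false
open SimpleGraph
open scoped ENNReal
namespace GreedyOpt

variable {V : Type*} [Fintype V] [DecidableEq V]

lemma sum_biUnion_le {α β : Type*} [DecidableEq β] (s : Finset α) (tt : α → Finset β)
    (f : β → ℝ≥0∞) : ∑ x ∈ s.biUnion tt, f x ≤ ∑ a ∈ s, ∑ x ∈ tt a, f x := by
  classical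
  induction s using Finset.induction_on with
  | empty => simp
  | insert _ _ h ih =>
    rw [Finset.biUnion_insert, Finset.sum_insert h]
    refine le_trans ?_ (add_le_add le_rfl ih)
    calc ∑ x ∈ _ ∪ _, f x ≤ (∑ x ∈ _ ∪ _, f x) + ∑ x ∈ _ ∩ _, f x :=
          le_add_of_nonneg_right zero_le
      _ = _ := Finset.sum_union_inter

section Metric
variable [MetricSpace V]

lemma mw_mk (a b : V) : mw V s(a,b) = dist a b := rfl

lemma mw_nonneg (e : Sym2 V) : 0 ≤ mw V e := by
  induction e using Sym2.ind with
  | _ a b => rw [mw_mk]; exact dist_nonneg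

lemma dist_le_walkWeight {G : SimpleGraph V} {u v : V} (p : G.Walk u v) :
    ENNReal.ofReal (dist u v) ≤ walkWeight (mw V) p := by
  induction p with
  | nil => simp [walkWeight_nil, dist_self]
  | @cons u x v h p ih =>
    rw [walkWeight_cons, mw_mk]
    calc ENNReal.ofReal (dist u v) ≤ ENNReal.ofReal (dist u x + dist x v) :=
          ENNReal.ofReal_le_ofReal (dist_triangle u x v)
      _ ≤ ENNReal.ofReal (dist u x) + ENNReal.ofReal (dist x v) := ENNReal.ofReal_add_le
      _ ≤ _ := add_le_add le_rfl ih

lemma ofReal_dist_le_edist (E : Finset (Sym2 V)) (a b : V) :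
    ENNReal.ofReal (dist a b) ≤ edist E (mw V) s(a,b) := by
  rw [edist_eq_sInf_pair]
  exact le_sInf (by rintro x ⟨p, rfl⟩; exact dist_le_walkWeight p)

lemma edist_mem_eq {E : Finset (Sym2 V)} {a b : V} (he : s(a,b) ∈ E) (hab : a ≠ b) :
    edist E (mw V) s(a,b) = ENNReal.ofReal (dist a b) := by
  refine le_antisymm ?_ (ofReal_dist_le_edist E a b)
  have hadj : (toSG E).Adj a b := toSG_adj.mpr ⟨he, hab⟩
  have hle := edist_le_walk (w := mw V) (Walk.cons hadj Walk.nil)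
  rwa [walkWeight_cons, walkWeight_nil, add_zero, mw_mk] at hle

end Metric
end GreedyOpt
end Aux4
section CopyLem
set_option linter.unusedSectionVars false
open SimpleGraph
open scoped ENNReal
namespace GreedyOpt
variable {V : Type*} [Fintype V] [DecidableEq V]
lemma walkWeight_eq_copy {w : Sym2 V → ℝ} {G : SimpleGraph V} {u v u' v' : V}
    (p : G.Walk u v) (hu : u = u') (hv : v = v') :
    walkWeight w (p.copy hu hv) = walkWeight w p := by
  subst hu; subst hv; rfl
end GreedyOpt
end CopyLem
open SimpleGraph in
open scoped ENNReal in
theorem greedy_weight_optimal' {V : Type*} [MetricSpace V] [Fintype V] [DecidableEq V]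
    (t : ℝ) (ht : 1 ≤ t) (H H' : Finset (Sym2 V))
    (hH : IsGreedy (mw V) t (completeE V) H)
    (hH'sub : H' ⊆ completeE V)
    (hH'span : ∀ u v : V, edist H' (indw H (mw V)) s(u, v) ≤
      ENNReal.ofReal t * edist H (mw V) s(u, v)) :
    gweight (mw V) H ≤ gweight (indw H (mw V)) H' := by
  classical
  obtain ⟨l, hnd, hmem, hsort, hres⟩ := hH
  have hwnn : ∀ e : Sym2 V, 0 ≤ mw V e := GreedyOpt.mw_nonneg
  have ht0 : (0:ℝ) ≤ t := le_trans zero_le_one ht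
  have hHsub : H ⊆ completeE V := by
    rw [← hres]
    refine subset_trans (GreedyOpt.greedyList_subset l ∅) ?_
    intro g hg
    rcases Finset.mem_union.mp hg with h | h
    · simp at h
    · rwa [List.mem_toFinset, hmem] at h
  have hHnd : ∀ g ∈ H, ¬ g.IsDiag := fun g hg => (Finset.mem_filter.mp (hHsub hg)).2
  have hlnd : ∀ e ∈ l, ¬ e.IsDiag := fun e he => (Finset.mem_filter.mp ((hmem e).mp he)).2
  have hA : ∀ g ∈ H, ENNReal.ofReal (t * mw V g) < edist (H.erase g) (mw V) g := by
    rw [← hres]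
    exact GreedyOpt.greedy_claimA hwnn ht0 l ∅ hnd hsort hlnd (by simp) (by simp) (by simp)
      (by simp)
  have hspan : ∀ a b : V, a ≠ b →
      edist H (mw V) s(a,b) ≤ ENNReal.ofReal (t * mw V s(a,b)) := by
    intro a b hab
    rw [← hres]
    refine GreedyOpt.greedy_spanner_aux hwnn ht l ∅ hlnd s(a,b) ?_
    rw [hmem, completeE, Finset.mem_filter]
    exact ⟨Finset.mem_univ _, by rwa [Sym2.mk_isDiag_iff]⟩
  have hfin : ∀ a b : V, edist H (mw V) s(a,b) ≠ ⊤ := by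
    intro a b
    by_cases hab : a = b
    · subst hab; rw [GreedyOpt.edist_diag]; exact ENNReal.zero_ne_top
    · exact ne_top_of_le_ne_top ENNReal.ofReal_ne_top (hspan a b hab)
  have hfin' : ∀ f : Sym2 V, edist H (mw V) f ≠ ⊤ := fun f => by
    induction f using Sym2.ind with
    | _ a b => exact hfin a b
  -- choose minimum-weight walks realizing the induced weights of the edges of H'
  have hAtt : ∀ f ∈ H', ∃ (a b : V) (p : (toSG H).Walk a b),
      f = s(a,b) ∧ walkWeight (mw V) p = edist H (mw V) f := by
    intro f hf
    induction f using Sym2.ind with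
    | _ a b =>
      obtain ⟨p, hp⟩ := GreedyOpt.edist_attained (mw V) H a b (hfin a b)
      exact ⟨a, b, p, rfl, hp⟩
  choose pa pb pw hp1 hp2 using hAtt
  -- lift walks of `H'` to walks of `H` built out of the chosen walks
  have lift : ∀ {α β : V} (p : (toSG H').Walk α β), ∃ Q : (toSG H).Walk α β,
      walkWeight (mw V) Q = walkWeight (indw H (mw V)) p ∧
      ∀ e ∈ Q.edges, ∃ (f : Sym2 V) (hf : f ∈ H'), e ∈ (pw f hf).edges := by
    intro α β p
    induction p with
    | nil => exact ⟨Walk.nil, by rw [GreedyOpt.walkWeight_nil, GreedyOpt.walkWeight_nil],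
        by simp⟩
    | @cons α x β h p' ih =>
      obtain ⟨Q', hQ'w, hQ'e⟩ := ih
      have hmem' : s(α, x) ∈ H' := (GreedyOpt.toSG_adj.mp h).1
      have hq := hp2 _ hmem'
      have hq1 := hp1 _ hmem'
      -- orient the chosen walk
      have : ∃ q' : (toSG H).Walk α x,
          walkWeight (mw V) q' = edist H (mw V) s(α, x) ∧
          ∀ e ∈ q'.edges, e ∈ (pw _ hmem').edges := by
        rcases Sym2.eq_iff.mp hq1 with ⟨ha, hb⟩ | ⟨ha, hb⟩
        · refine ⟨(pw _ hmem').copy ha.symm hb.symm, ?_, ?_⟩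
          · rw [GreedyOpt.walkWeight_eq_copy, hq]
          · intro e he; rwa [Walk.edges_copy] at he
        · refine ⟨(pw _ hmem').reverse.copy ha.symm hb.symm, ?_, ?_⟩
          · rw [GreedyOpt.walkWeight_eq_copy, GreedyOpt.walkWeight_reverse, hq]
          · intro e he
            rw [Walk.edges_copy, Walk.edges_reverse, List.mem_reverse] at he
            exact he
      obtain ⟨q', hq'w, hq'e⟩ := this
      refine ⟨q'.append Q', ?_, ?_⟩
      · rw [GreedyOpt.walkWeight_append, hq'w, hQ'w, GreedyOpt.walkWeight_cons]
        congr 1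
        show edist H (mw V) s(α, x) = ENNReal.ofReal (indw H (mw V) s(α, x))
        rw [indw, ENNReal.ofReal_toReal (hfin' _)]
      · intro e he
        rw [Walk.edges_append, List.mem_append] at he
        rcases he with he | he
        · exact ⟨_, hmem', hq'e e he⟩
        · exact hQ'e e he
  -- every edge of `H` is used by some chosen walk
  have hcov : ∀ g ∈ H, ∃ (f : Sym2 V) (hf : f ∈ H'), g ∈ (pw f hf).edges := by
    intro g hg
    by_contra hno
    push_neg at hno
    revert hg hno
    induction g using Sym2.ind with
    | _ gu gv =>
      intro hg hno
      have hgnd : ¬ (s(gu, gv) : Sym2 V).IsDiag := hHnd _ hg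
      have hgne : gu ≠ gv := by rwa [Sym2.mk_isDiag_iff] at hgnd
      have hD : edist (H.erase s(gu,gv)) (mw V) s(gu,gv) ≤
          edist H' (indw H (mw V)) s(gu,gv) := by
        apply GreedyOpt.le_edist
        intro u' v' p hg'
        obtain ⟨Q, hQw, hQe⟩ := lift p
        have hgQ : s(gu,gv) ∉ Q.edges := by
          intro hgQ
          obtain ⟨f, hf, hmem''⟩ := hQe _ hgQ
          exact hno f hf hmem''
        have hQ' : ∀ e ∈ Q.edges, e ∈ (toSG (H.erase s(gu,gv))).edgeSet := by
          intro e he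
          have h2 := GreedyOpt.edge_mem_of_mem_edges he
          rw [toSG, SimpleGraph.edgeSet_fromEdgeSet]
          exact ⟨Finset.mem_erase.mpr ⟨fun h' => hgQ (h' ▸ he), h2.1⟩, h2.2⟩
        have hle : edist (H.erase s(gu,gv)) (mw V) s(gu,gv) ≤
            walkWeight (mw V) (Q.transfer _ hQ') := sInf_le ⟨u', v', _, hg', rfl⟩
        rwa [GreedyOpt.walkWeight_transfer, hQw] at hle
      have hup := hH'span gu gv
      have h1 : edist H (mw V) s(gu,gv) = ENNReal.ofReal (dist gu gv) :=
        GreedyOpt.edist_mem_eq hg hgne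
      have h2 : ENNReal.ofReal t * edist H (mw V) s(gu,gv)
          = ENNReal.ofReal (t * mw V s(gu,gv)) := by
        rw [h1, GreedyOpt.mw_mk, ← ENNReal.ofReal_mul ht0]
      have := lt_of_lt_of_le (hA _ hg) (le_trans hD (le_trans hup (le_of_eq h2)))
      exact lt_irrefl _ this
  -- the weight comparison
  set Eds : Finset (Sym2 V) := H'.attach.biUnion (fun f => (pw f.1 f.2).edges.toFinset)
    with hEds
  have hHEds : H ⊆ Eds := by
    intro g hg
    obtain ⟨f, hf, hm⟩ := hcov g hg
    exact Finset.mem_biUnion.mpr ⟨⟨f, hf⟩, Finset.mem_attach _ _, List.mem_toFinset.mpr hm⟩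
  have hsum1 : ∀ f : {x // x ∈ H'},
      (∑ e ∈ (pw f.1 f.2).edges.toFinset, ENNReal.ofReal (mw V e)) ≤ edist H (mw V) f.1 := by
    intro f
    rw [← hp2 f.1 f.2]
    exact GreedyOpt.toFinset_sum_le _ _
  have hchain : (∑ g ∈ H, ENNReal.ofReal (mw V g)) ≤
      ∑ f ∈ H'.attach, edist H (mw V) f.1 := by
    calc ∑ g ∈ H, ENNReal.ofReal (mw V g) ≤ ∑ g ∈ Eds, ENNReal.ofReal (mw V g) :=
          Finset.sum_le_sum_of_subset hHEds
      _ ≤ ∑ f ∈ H'.attach, ∑ e ∈ (pw f.1 f.2).edges.toFinset, ENNReal.ofReal (mw V e) :=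
          GreedyOpt.sum_biUnion_le _ _ _
      _ ≤ _ := Finset.sum_le_sum (fun f _ => hsum1 f)
  have hfinsum : (∑ f ∈ H'.attach, edist H (mw V) f.1) ≠ ⊤ := by
    refine (ENNReal.sum_lt_top.mpr ?_).ne
    intro f _
    exact lt_top_iff_ne_top.mpr (hfin' f.1)
  have hlhs : gweight (mw V) H = (∑ g ∈ H, ENNReal.ofReal (mw V g)).toReal := by
    rw [ENNReal.toReal_sum (fun g _ => ENNReal.ofReal_ne_top)]
    rw [gweight]
    exact Finset.sum_congr rfl (fun g _ => (ENNReal.toReal_ofReal (hwnn g)).symm)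
  have hrhs : gweight (indw H (mw V)) H' = (∑ f ∈ H'.attach, edist H (mw V) f.1).toReal := by
    rw [ENNReal.toReal_sum (fun f _ => hfin' f.1)]
    rw [gweight, ← Finset.sum_attach H' (fun f => indw H (mw V) f)]
    rfl
  rw [hlhs, hrhs]
  exact ENNReal.toReal_mono hfinsum hchain

/-- Weight optimality of the greedy spanner against spanners of
its induced metric: if `H` is the greedy `t`-spanner of a finite metric space
`M` and `H'` is any `t`-spanner of the metric space `M_H` induced by `H`, then
`w(H) ≤ w(H')`. -/
theorem greedy_weight_optimal {V : Type*} [MetricSpace V] [Fintype V] [DecidableEq V]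
    (t : ℝ) (ht : 1 ≤ t) (H H' : Finset (Sym2 V))
    (hH : IsGreedy (mw V) t (completeE V) H)
    (hH'sub : H' ⊆ completeE V)
    (hH'span : ∀ u v : V, edist H' (indw H (mw V)) s(u, v) ≤
      ENNReal.ofReal t * edist H (mw V) s(u, v)) :
    gweight (mw V) H ≤ gweight (indw H (mw V)) H' :=
  greedy_weight_optimal' t ht H H' hH hH'sub hH'span
end

section
/- Size optimality of the greedy spanner for stretch t < 2: Let M be a metric space, 1 ≤ t < 2, and H the greedy t-spanner of M. Then for every t-spanner H' of the induced metric space M_H, the number of edges of H is at most the number of edges of H'. -/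
open SimpleGraph
open scoped ENNReal
set_option linter.unusedSectionVars false

variable {V : Type*} [Fintype V] [DecidableEq V]

namespace GreedyAux

omit [Fintype V] [DecidableEq V] in
@[simp] lemma walkWeight_nil (w : Sym2 V → ℝ) {G : SimpleGraph V} {u : V} :
    walkWeight w (SimpleGraph.Walk.nil : G.Walk u u) = 0 := by simp [walkWeight]

omit [Fintype V] [DecidableEq V] in
@[simp] lemma walkWeight_cons (w : Sym2 V → ℝ) {G : SimpleGraph V} {u v x : V}
    (h : G.Adj u v) (p : G.Walk v x) :
    walkWeight w (SimpleGraph.Walk.cons h p) = ENNReal.ofReal (w s(u, v)) + walkWeight w p := by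
  simp [walkWeight]

omit [Fintype V] [DecidableEq V] in
@[simp] lemma walkWeight_append (w : Sym2 V → ℝ) {G : SimpleGraph V} {u v x : V}
    (p : G.Walk u v) (q : G.Walk v x) :
    walkWeight w (p.append q) = walkWeight w p + walkWeight w q := by
  simp [walkWeight, SimpleGraph.Walk.edges_append]

omit [Fintype V] [DecidableEq V] in
@[simp] lemma walkWeight_reverse (w : Sym2 V → ℝ) {G : SimpleGraph V} {u v : V}
    (p : G.Walk u v) : walkWeight w p.reverse = walkWeight w p := by
  simp [walkWeight, SimpleGraph.Walk.edges_reverse, List.sum_reverse]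

omit [Fintype V] [DecidableEq V] in
@[simp] lemma walkWeight_copy (w : Sym2 V → ℝ) {G : SimpleGraph V} {u v u' v' : V}
    (p : G.Walk u v) (hu : u = u') (hv : v = v') :
    walkWeight w (p.copy hu hv) = walkWeight w p := by
  simp [walkWeight, SimpleGraph.Walk.edges_copy]

omit [Fintype V] [DecidableEq V] in
@[simp] lemma walkWeight_transfer (w : Sym2 V → ℝ) {G G' : SimpleGraph V} {u v : V}
    (p : G.Walk u v) (hp : ∀ e ∈ p.edges, e ∈ G'.edgeSet) :
    walkWeight w (p.transfer G' hp) = walkWeight w p := by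
  simp [walkWeight, SimpleGraph.Walk.edges_transfer]

lemma edist_le {H : Finset (Sym2 V)} (w : Sym2 V → ℝ) {a b : V} (p : (toSG H).Walk a b) :
    edist H w s(a, b) ≤ walkWeight w p :=
  sInf_le ⟨a, b, p, rfl, rfl⟩

lemma edist_eq (H : Finset (Sym2 V)) (w : Sym2 V → ℝ) (a b : V) :
    edist H w s(a, b) = sInf {x | ∃ p : (toSG H).Walk a b, walkWeight w p = x} := by
  apply le_antisymm
  · exact le_sInf (by rintro x ⟨p, rfl⟩; exact edist_le w p)
  · apply le_sInf
    rintro x ⟨u, v, p, he, rfl⟩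
    rcases Sym2.eq_iff.mp he with ⟨rfl, rfl⟩ | ⟨rfl, rfl⟩
    · exact sInf_le ⟨p, rfl⟩
    · exact sInf_le ⟨p.reverse, walkWeight_reverse w p⟩

lemma edist_anti {H₁ H₂ : Finset (Sym2 V)} (h : H₁ ⊆ H₂) (w : Sym2 V → ℝ) (e : Sym2 V) :
    edist H₂ w e ≤ edist H₁ w e := by
  apply le_sInf
  rintro x ⟨u, v, p, he, rfl⟩
  have hsub : ∀ c ∈ p.edges, c ∈ (toSG H₂).edgeSet := by
    intro c hc
    have h1 := p.edges_subset_edgeSet hc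
    simp only [toSG, edgeSet_fromEdgeSet, Set.mem_diff] at h1 ⊢
    exact ⟨h h1.1, h1.2⟩
  exact sInf_le ⟨u, v, p.transfer _ hsub, he, walkWeight_transfer w p hsub⟩

lemma edist_le_single {H : Finset (Sym2 V)} (w : Sym2 V → ℝ) {a b : V}
    (hmem : s(a, b) ∈ H) (hab : a ≠ b) :
    edist H w s(a, b) ≤ ENNReal.ofReal (w s(a, b)) := by
  have adj : (toSG H).Adj a b := by
    simp only [toSG, fromEdgeSet_adj, Finset.coe_sort_coe, Finset.mem_coe]
    exact ⟨hmem, hab⟩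
  simpa using edist_le w (SimpleGraph.Walk.cons adj SimpleGraph.Walk.nil)

omit [Fintype V] [DecidableEq V] in
lemma sum_map_le_of_sublist (g : Sym2 V → ℝ≥0∞) {l₁ l₂ : List (Sym2 V)} (h : List.Sublist l₁ l₂) :
    (l₁.map g).sum ≤ (l₂.map g).sum := by
  induction h with
  | slnil => simp
  | cons a h ih => simpa using le_trans ih (le_add_self)
  | cons_cons a h ih => simpa using add_le_add_right ih _

omit [Fintype V] [DecidableEq V] in
lemma sum_map_le_of_subperm (g : Sym2 V → ℝ≥0∞) {l₁ l₂ : List (Sym2 V)} (h : List.Subperm l₁ l₂) :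
    (l₁.map g).sum ≤ (l₂.map g).sum := by
  obtain ⟨l', hp, hs⟩ := h
  calc (l₁.map g).sum = (l'.map g).sum := ((hp.map g).sum_eq).symm
    _ ≤ (l₂.map g).sum := sum_map_le_of_sublist g hs

lemma two_le_sum (g : Sym2 V → ℝ≥0∞) {l : List (Sym2 V)} {a b : Sym2 V}
    (ha : a ∈ l) (hb : b ∈ l) (hab : a ≠ b) :
    g a + g b ≤ (l.map g).sum := by
  have hnd : ([a, b] : List (Sym2 V)).Nodup := by simp [hab]
  have hsub : ([a, b] : List (Sym2 V)) ⊆ l := by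
    intro x hx
    rcases List.mem_pair.mp hx with rfl | rfl <;> assumption
  simpa using sum_map_le_of_subperm g (hnd.subperm hsub)

omit [Fintype V] [DecidableEq V] in
lemma single_le_sum' (g : Sym2 V → ℝ≥0∞) {l : List (Sym2 V)} {a : Sym2 V} (ha : a ∈ l) :
    g a ≤ (l.map g).sum :=
  List.le_sum_of_mem (List.mem_map_of_mem ha)

omit [Fintype V] in
lemma walkWeight_bypass_le (w : Sym2 V → ℝ) {G : SimpleGraph V} {u v : V} (p : G.Walk u v) :
    walkWeight w p.bypass ≤ walkWeight w p :=
  sum_map_le_of_subperm _ (p.bypass_isPath.edges_nodup.subperm p.edges_bypass_subset)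

lemma exists_walk_edist (H : Finset (Sym2 V)) (w : Sym2 V → ℝ) {a b : V}
    (hne : edist H w s(a, b) ≠ ⊤) :
    ∃ p : (toSG H).Walk a b, p.edges.Nodup ∧ walkWeight w p = edist H w s(a, b) := by
  classical
  haveI : DecidableRel (toSG H).Adj := Classical.decRel _
  rw [edist_eq] at hne ⊢
  set S : Set ℝ≥0∞ := {x | ∃ p : (toSG H).Walk a b, walkWeight w p = x} with hS
  have hSne : S.Nonempty := by
    by_contra hc
    rw [Set.not_nonempty_iff_eq_empty] at hc
    rw [hc, sInf_empty] at hne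
    exact hne rfl
  obtain ⟨x₀, p₀, rfl⟩ := hSne
  set T : Set ℝ≥0∞ := Set.range (fun q : (toSG H).Path a b => walkWeight w q.val) with hT
  have hTfin : T.Finite := Set.finite_range _
  have hTne : T.Nonempty := ⟨_, ⟨⟨p₀.bypass, p₀.bypass_isPath⟩, rfl⟩⟩
  obtain ⟨q, hq⟩ := hTne.csInf_mem hTfin
  refine ⟨q.val, q.prop.edges_nodup, ?_⟩
  apply le_antisymm
  · apply le_sInf
    rintro x ⟨p, rfl⟩
    calc walkWeight w q.val = sInf T := hq
      _ ≤ walkWeight w p.bypass := csInf_le (OrderBot.bddBelow T) ⟨⟨p.bypass, p.bypass_isPath⟩, rfl⟩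
      _ ≤ walkWeight w p := walkWeight_bypass_le w p
  · exact sInf_le ⟨q.val, rfl⟩

section Metric
variable {M : Type*} [MetricSpace M]

@[simp] lemma mw_mk (a b : M) : mw M s(a, b) = dist a b := rfl

lemma mw_nonneg (e : Sym2 M) : 0 ≤ mw M e := by
  induction e using Sym2.ind with
  | _ a b => simpa using dist_nonneg

lemma ofReal_dist_le_walkWeight {G : SimpleGraph M} {a b : M} (p : G.Walk a b) :
    ENNReal.ofReal (dist a b) ≤ walkWeight (mw M) p := by
  induction p with
  | nil => simp
  | @cons u c b h p ih =>
      rw [walkWeight_cons]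
      calc ENNReal.ofReal (dist u b) ≤ ENNReal.ofReal (dist u c + dist c b) := by
            exact ENNReal.ofReal_le_ofReal (dist_triangle u c b)
        _ ≤ ENNReal.ofReal (dist u c) + ENNReal.ofReal (dist c b) := ENNReal.ofReal_add_le
        _ ≤ ENNReal.ofReal (mw M s(u, c)) + walkWeight (mw M) p := by
            rw [mw_mk]; exact add_le_add le_rfl ih

end Metric

variable [MetricSpace V]

lemma ofReal_dist_le_edist (H : Finset (Sym2 V)) (a b : V) :
    ENNReal.ofReal (dist a b) ≤ edist H (mw V) s(a, b) := by
  rw [edist_eq]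
  apply le_sInf
  rintro x ⟨p, rfl⟩
  exact ofReal_dist_le_walkWeight p

lemma edist_eq_of_mem {H : Finset (Sym2 V)} {a b : V} (hmem : s(a, b) ∈ H) (hab : a ≠ b) :
    edist H (mw V) s(a, b) = ENNReal.ofReal (dist a b) := by
  apply le_antisymm
  · simpa using edist_le_single (mw V) hmem hab
  · exact ofReal_dist_le_edist H a b

section Greedy
variable (w : Sym2 V → ℝ) (t : ℝ)

lemma greedy_mono : ∀ (l : List (Sym2 V)) (H₀ : Finset (Sym2 V)), H₀ ⊆ greedyList w t l H₀ := by
  intro l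
  induction l with
  | nil => intro H₀; simp [greedyList]
  | cons e l ih =>
      intro H₀
      rw [greedyList]
      refine subset_trans ?_ (ih _)
      split <;> simp [Finset.subset_insert]

lemma greedy_subset : ∀ (l : List (Sym2 V)) (H₀ : Finset (Sym2 V)),
    greedyList w t l H₀ ⊆ H₀ ∪ l.toFinset := by
  intro l
  induction l with
  | nil => intro H₀; simp [greedyList]
  | cons e l ih =>
      intro H₀
      rw [greedyList]
      refine subset_trans (ih _) ?_
      intro x hx
      rcases Finset.mem_union.mp hx with hx | hx
      · split at hx
        · rcases Finset.mem_insert.mp hx with rfl | hx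
          · simp
          · exact Finset.mem_union.mpr (Or.inl hx)
        · exact Finset.mem_union.mpr (Or.inl hx)
      · simp only [List.toFinset_cons, Finset.mem_union, Finset.mem_insert]
        exact Or.inr (Or.inr hx)

lemma greedy_append : ∀ (l₁ l₂ : List (Sym2 V)) (H₀ : Finset (Sym2 V)),
    greedyList w t (l₁ ++ l₂) H₀ = greedyList w t l₂ (greedyList w t l₁ H₀) := by
  intro l₁
  induction l₁ with
  | nil => intro l₂ H₀; simp [greedyList]
  | cons e l ih => intro l₂ H₀; rw [List.cons_append, greedyList, greedyList, ih]

lemma greedy_added {l₁ l₂ : List (Sym2 V)} {f : Sym2 V} {H₀ : Finset (Sym2 V)}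
    (h₁ : f ∉ l₁) (h₂ : f ∉ l₂) (h0 : f ∉ H₀)
    (hf : f ∈ greedyList w t (l₁ ++ f :: l₂) H₀) :
    ENNReal.ofReal (t * w f) < edist (greedyList w t l₁ H₀) w f := by
  rw [greedy_append] at hf
  set H₁ := greedyList w t l₁ H₀ with hH₁
  by_contra hcond
  rw [greedyList, if_neg hcond] at hf
  have := greedy_subset w t l₂ H₁ hf
  rcases Finset.mem_union.mp this with hx | hx
  · have := greedy_subset w t l₁ H₀ hx
    rcases Finset.mem_union.mp this with hx' | hx'
    · exact h0 hx'
    · exact h₁ (List.mem_toFinset.mp hx')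
  · exact h₂ (List.mem_toFinset.mp hx)

lemma not_isDiag_exists {e : Sym2 V} (h : ¬ e.IsDiag) : ∃ u v : V, u ≠ v ∧ e = s(u, v) := by
  induction e using Sym2.ind with
  | _ u v => exact ⟨u, v, fun h' => h (Sym2.mk_isDiag_iff.mpr h'), rfl⟩

lemma greedy_spanner (ht : 1 ≤ t) (hw : ∀ e, 0 ≤ w e) :
    ∀ (l : List (Sym2 V)) (H₀ : Finset (Sym2 V)) (e : Sym2 V), e ∈ l → ¬ e.IsDiag →
    edist (greedyList w t l H₀) w e ≤ ENNReal.ofReal (t * w e) := by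
  intro l
  induction l with
  | nil => intro H₀ e he; simp at he
  | cons a l ih =>
      intro H₀ e he hd
      by_cases hea : e = a
      · subst hea
        rw [greedyList]
        obtain ⟨u, v, huv, heq⟩ := not_isDiag_exists hd
        set H₁ := if ENNReal.ofReal (t * w e) < edist H₀ w e then insert e H₀ else H₀ with hH₁
        have hfin : edist (greedyList w t l H₁) w e ≤ edist H₁ w e :=
          edist_anti (greedy_mono w t l H₁) w e
        refine le_trans hfin ?_
        by_cases hc : ENNReal.ofReal (t * w e) < edist H₀ w e
        · have hmem : e ∈ H₁ := by rw [hH₁, if_pos hc]; exact Finset.mem_insert_self e H₀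
          have h2 : edist H₁ w e ≤ ENNReal.ofReal (w e) := by
            rw [heq] at hmem ⊢
            exact edist_le_single w hmem huv
          refine le_trans h2 (ENNReal.ofReal_le_ofReal ?_)
          exact le_mul_of_one_le_left (hw e) ht
        · rw [hH₁, if_neg hc]; exact not_lt.mp hc
      · exact ih _ e (by rcases List.mem_cons.mp he with h | h; exact absurd h hea; exact h) hd

end Greedy

lemma exists_last_split : ∀ (l : List (Sym2 V)) (C : Finset (Sym2 V)), C.Nonempty →
    (∀ c ∈ C, c ∈ l) →
    ∃ (l₁ : List (Sym2 V)) (f : Sym2 V) (l₂ : List (Sym2 V)),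
      l = l₁ ++ f :: l₂ ∧ f ∈ C ∧ ∀ c ∈ C, c ∉ l₂ := by
  intro l
  induction l with
  | nil =>
      intro C hne hsub
      obtain ⟨c, hc⟩ := hne
      simpa using hsub c hc
  | cons a l ih =>
      intro C hne hsub
      by_cases hC : ∃ c ∈ C, c ∈ l
      · obtain ⟨c₀, hc₀C, hc₀l⟩ := hC
        obtain ⟨l₁, f, l₂, hl, hfC, hnot⟩ :=
          ih (C.filter (· ∈ l)) ⟨c₀, Finset.mem_filter.mpr ⟨hc₀C, by simpa using hc₀l⟩⟩
            (fun c hc => (Finset.mem_filter.mp hc).2)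
        refine ⟨a :: l₁, f, l₂, by rw [hl]; rfl, (Finset.mem_filter.mp hfC).1, ?_⟩
        intro c hcC hcl₂
        have hcl : c ∈ l := by rw [hl]; exact List.mem_append.mpr (Or.inr (List.mem_cons_of_mem _ hcl₂))
        exact hnot c (Finset.mem_filter.mpr ⟨hcC, by simpa using hcl⟩) hcl₂
      · push_neg at hC
        obtain ⟨c₀, hc₀⟩ := hne
        have hc₀a : c₀ = a := by
          rcases List.mem_cons.mp (hsub c₀ hc₀) with h | h
          · exact h
          · exact absurd h (hC c₀ hc₀)
        refine ⟨[], a, l, rfl, hc₀a ▸ hc₀, fun c hc => hC c hc⟩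

omit [Fintype V] [DecidableEq V] [MetricSpace V] in
lemma walk_edge_split {G : SimpleGraph V} : ∀ {u v : V} (W : G.Walk u v) (f : Sym2 V),
    f ∈ W.edges →
    ∃ (x y : V) (W₁ : G.Walk u x) (W₂ : G.Walk y v),
      f = s(x, y) ∧ W.edges = W₁.edges ++ f :: W₂.edges := by
  intro u v W
  induction W with
  | nil => intro f hf; simp at hf
  | @cons u c v h W ih =>
      intro f hf
      rw [SimpleGraph.Walk.edges_cons] at hf
      rcases List.mem_cons.mp hf with rfl | hf
      · exact ⟨u, c, SimpleGraph.Walk.nil, W, rfl, by simp⟩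
      · obtain ⟨x, y, W₁, W₂, hfs, hW⟩ := ih f hf
        exact ⟨x, y, SimpleGraph.Walk.cons h W₁, W₂, hfs, by simp [hW]⟩

lemma mem_H_of_edge {H : Finset (Sym2 V)} {G : SimpleGraph V} (hG : G = toSG H)
    {a b : V} {W : G.Walk a b} {c : Sym2 V} (hc : c ∈ W.edges) : c ∈ H ∧ ¬ c.IsDiag := by
  subst hG
  have h1 := W.edges_subset_edgeSet hc
  rw [toSG, edgeSet_fromEdgeSet, Set.mem_diff] at h1
  exact ⟨by simpa using h1.1, by simpa using h1.2⟩

lemma key_mem (w : Sym2 V → ℝ) {t : ℝ} (ht : 1 ≤ t) (ht2 : t < 2) (hw : ∀ e, 0 ≤ w e)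
    {l : List (Sym2 V)} (hnd : l.Nodup) (hsort : l.Pairwise fun a b => w a ≤ w b)
    {H : Finset (Sym2 V)} (hgreedy : greedyList w t l ∅ = H)
    {u v : V} (huv : u ≠ v) {e : Sym2 V} (he : e = s(u, v)) (heH : e ∈ H) (hwe : 0 < w e)
    (W : (toSG H).Walk u v) (hW : walkWeight w W ≤ ENNReal.ofReal (t * w e)) :
    e ∈ W.edges := by
  by_contra hnot
  have hHl : ∀ c ∈ H, c ∈ l := by
    intro c hc
    have := greedy_subset w t l ∅ (hgreedy ▸ hc)
    simpa using this
  set C : Finset (Sym2 V) := insert e W.edges.toFinset with hC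
  have hCH : ∀ c ∈ C, c ∈ H := by
    intro c hc
    rcases Finset.mem_insert.mp hc with rfl | hc
    · exact heH
    · exact (mem_H_of_edge rfl (List.mem_toFinset.mp hc)).1
  obtain ⟨l₁, f, l₂, hl, hfC, hnotl₂⟩ :=
    exists_last_split l C ⟨e, Finset.mem_insert_self e _⟩ (fun c hc => hHl c (hCH c hc))
  have hnd' := hnd
  rw [hl] at hnd'
  obtain ⟨hnd₁, hnd₂, hdisj⟩ := List.nodup_append'.mp hnd'
  have hfl₁ : f ∉ l₁ := fun h => hdisj h List.mem_cons_self
  have hfl₂ : f ∉ l₂ := (List.nodup_cons.mp hnd₂).1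
  set H₁ := greedyList w t l₁ ∅ with hH₁
  have hadd : ENNReal.ofReal (t * w f) < edist H₁ w f := by
    apply greedy_added w t hfl₁ hfl₂ (Finset.notMem_empty f)
    rw [← hl, hgreedy]
    exact hCH f hfC
  have hC₁ : ∀ c ∈ C, c ≠ f → c ∈ H₁ := by
    intro c hc hne
    have hcH : c ∈ H := hCH c hc
    rw [← hgreedy, hl, greedy_append] at hcH
    rcases Finset.mem_union.mp (greedy_subset w t (f :: l₂) H₁ hcH) with h | h
    · exact h
    · simp only [List.toFinset_cons, Finset.mem_insert, List.mem_toFinset] at h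
      rcases h with rfl | h
      · exact absurd rfl hne
      · exact absurd h (hnotl₂ c hc)
  have hwef : w e ≤ w f := by
    by_cases hef : e = f
    · exact le_of_eq (congrArg w hef)
    · have hel : e ∈ l := hHl e heH
      rw [hl] at hel
      rcases List.mem_append.mp hel with h | h
      · rw [hl] at hsort
        have := (List.pairwise_append.mp hsort).2.2
        exact this e h f List.mem_cons_self
      · rcases List.mem_cons.mp h with h | h
        · exact absurd h hef
        · exact absurd h (hnotl₂ e (Finset.mem_insert_self e _))
  by_cases hef : f = e
  · -- W avoids e = f entirely, so W lives in H₁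
    subst hef
    have hsubW : ∀ c ∈ W.edges, c ∈ (toSG H₁).edgeSet := by
      intro c hc
      have h2 := mem_H_of_edge rfl hc
      have hcC : c ∈ C := Finset.mem_insert_of_mem (List.mem_toFinset.mpr hc)
      have hcne : c ≠ f := fun h => hnot (h ▸ hc)
      rw [toSG, edgeSet_fromEdgeSet, Set.mem_diff]
      exact ⟨by simpa using hC₁ c hcC hcne, by simpa using h2.2⟩
    have h3 : edist H₁ w s(u, v) ≤ walkWeight w W := by
      have := edist_le w (W.transfer (toSG H₁) hsubW)
      rwa [walkWeight_transfer] at this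
    rw [← he] at h3
    exact absurd (lt_of_lt_of_le hadd (le_trans h3 hW)) (lt_irrefl _)
  · have hfW : f ∈ W.edges := by
      rcases Finset.mem_insert.mp hfC with h | h
      · exact absurd h hef
      · exact List.mem_toFinset.mp h
    have hwf : 0 < w f := lt_of_lt_of_le hwe hwef
    -- f occurs exactly once in W
    have hcount : W.edges.count f = 1 := by
      have h1 : 1 ≤ W.edges.count f := List.count_pos_iff.mpr hfW
      by_contra hc
      have h2 : 2 ≤ W.edges.count f := by omega
      have h3 := List.replicate_sublist_iff.mpr h2
      have h4 : ENNReal.ofReal (w f) + ENNReal.ofReal (w f) ≤ walkWeight w W := by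
        have := sum_map_le_of_sublist (fun c => ENNReal.ofReal (w c)) h3
        simpa [List.replicate, walkWeight] using this
      have h5 : ENNReal.ofReal (w f + w f) ≤ ENNReal.ofReal (t * w e) := by
        rw [ENNReal.ofReal_add (hw f) (hw f)]
        exact le_trans h4 hW
      have h6 : w f + w f ≤ t * w e :=
        (ENNReal.ofReal_le_ofReal_iff (by positivity)).mp h5
      nlinarith
    obtain ⟨x, y, W₁, W₂, hfs, hsplit⟩ := walk_edge_split W f hfW
    have hcnt2 : W₁.edges.count f + (W₂.edges.count f + 1) = 1 := by
      rw [hsplit] at hcount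
      simpa [List.count_append, List.count_cons] using hcount
    have hf₁ : f ∉ W₁.edges := List.count_eq_zero.mp (by omega)
    have hf₂ : f ∉ W₂.edges := List.count_eq_zero.mp (by omega)
    have hsub₁ : ∀ c ∈ W₁.edges, c ∈ (toSG H₁).edgeSet := by
      intro c hc
      have hcW : c ∈ W.edges := by rw [hsplit]; exact List.mem_append.mpr (Or.inl hc)
      have h2 := mem_H_of_edge rfl hcW
      have hcC : c ∈ C := Finset.mem_insert_of_mem (List.mem_toFinset.mpr hcW)
      have hcne : c ≠ f := fun h => hf₁ (h ▸ hc)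
      rw [toSG, edgeSet_fromEdgeSet, Set.mem_diff]
      exact ⟨by simpa using hC₁ c hcC hcne, by simpa using h2.2⟩
    have hsub₂ : ∀ c ∈ W₂.edges, c ∈ (toSG H₁).edgeSet := by
      intro c hc
      have hcW : c ∈ W.edges := by
        rw [hsplit]; exact List.mem_append.mpr (Or.inr (List.mem_cons_of_mem _ hc))
      have h2 := mem_H_of_edge rfl hcW
      have hcC : c ∈ C := Finset.mem_insert_of_mem (List.mem_toFinset.mpr hcW)
      have hcne : c ≠ f := fun h => hf₂ (h ▸ hc)
      rw [toSG, edgeSet_fromEdgeSet, Set.mem_diff]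
      exact ⟨by simpa using hC₁ c hcC hcne, by simpa using h2.2⟩
    have adjuv : (toSG H₁).Adj u v := by
      rw [toSG, fromEdgeSet_adj]
      refine ⟨?_, huv⟩
      have : e ∈ H₁ := hC₁ e (Finset.mem_insert_self e _) (fun h => hef (h.symm))
      simpa [← he] using this
    set Z : (toSG H₁).Walk x y :=
      (W₁.transfer (toSG H₁) hsub₁).reverse.append
        (SimpleGraph.Walk.cons adjuv (W₂.transfer (toSG H₁) hsub₂).reverse) with hZ
    have hZw : walkWeight w Z = walkWeight w W₁ + (ENNReal.ofReal (w e) + walkWeight w W₂) := by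
      rw [hZ, walkWeight_append, walkWeight_reverse, walkWeight_transfer,
        walkWeight_cons, walkWeight_reverse, walkWeight_transfer, ← he]
    have hWw : walkWeight w W = walkWeight w W₁ + (ENNReal.ofReal (w f) + walkWeight w W₂) := by
      rw [walkWeight, hsplit]
      simp [walkWeight]
    have hedistZ : edist H₁ w f ≤ walkWeight w Z := by
      rw [hfs]
      exact edist_le w Z
    have hlt : ENNReal.ofReal (t * w f) + ENNReal.ofReal (w f)
        < ENNReal.ofReal (t * w e) + ENNReal.ofReal (w e) := by
      calc ENNReal.ofReal (t * w f) + ENNReal.ofReal (w f)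
          < walkWeight w Z + ENNReal.ofReal (w f) :=
            ENNReal.add_lt_add_right ENNReal.ofReal_ne_top (lt_of_lt_of_le hadd hedistZ)
        _ = walkWeight w W + ENNReal.ofReal (w e) := by rw [hZw, hWw]; ring
        _ ≤ ENNReal.ofReal (t * w e) + ENNReal.ofReal (w e) := add_le_add_left hW _
    rw [← ENNReal.ofReal_add (by positivity) (hw f),
      ← ENNReal.ofReal_add (by positivity) (hw e)] at hlt
    have hfin : t * w f + w f < t * w e + w e :=
      (ENNReal.ofReal_lt_ofReal_iff_of_nonneg (by positivity)).mp hlt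
    nlinarith

end GreedyAux

open GreedyAux in
/-- Size optimality of the greedy spanner for stretch `t < 2`:
if `H` is the greedy `t`-spanner of a finite metric space `M` with `1 ≤ t < 2`
and `H'` is any `t`-spanner of the induced metric space `M_H`, then `H` has at
most as many edges as `H'`. -/
theorem greedy_size_optimal {V : Type*} [MetricSpace V] [Fintype V] [DecidableEq V]
    (t : ℝ) (ht : 1 ≤ t) (ht2 : t < 2) (H H' : Finset (Sym2 V))
    (hH : IsGreedy (mw V) t (completeE V) H)
    (hH'sub : H' ⊆ completeE V)
    (hH'span : ∀ u v : V, edist H' (indw H (mw V)) s(u, v) ≤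
      ENNReal.ofReal t * edist H (mw V) s(u, v)) :
    H.card ≤ H'.card := by
  classical
  obtain ⟨l, hnd, hmeml, hsort, hgreedy⟩ := hH
  set w := mw V with hwdef
  have hw : ∀ e, 0 ≤ w e := mw_nonneg
  have ht0 : 0 ≤ t := le_trans zero_le_one ht
  have hHsub : H ⊆ completeE V := by
    intro c hc
    have := greedy_subset w t l ∅ (hgreedy ▸ hc)
    simp only [Finset.empty_union, List.mem_toFinset] at this
    exact (hmeml c).mp this
  have hHdiag : ∀ c ∈ completeE V, ¬ c.IsDiag := fun c hc => (Finset.mem_filter.mp hc).2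
  have hpos : ∀ c ∈ completeE V, 0 < w c := by
    intro c hc
    obtain ⟨x, y, hxy, rfl⟩ := not_isDiag_exists (hHdiag c hc)
    simpa [hwdef] using dist_pos.mpr hxy
  have hspan : ∀ c ∈ completeE V, edist H w c ≤ ENNReal.ofReal (t * w c) := fun c hc =>
    hgreedy ▸ greedy_spanner w t ht hw l ∅ c ((hmeml c).mpr hc) (hHdiag c hc)
  set w' := indw H w with hw'def
  have hw'0 : ∀ c, 0 ≤ w' c := fun c => ENNReal.toReal_nonneg
  have hw'eq : ∀ c ∈ completeE V, ENNReal.ofReal (w' c) = edist H w c := by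
    intro c hc
    have hne : edist H w c ≠ ⊤ := ne_top_of_le_ne_top ENNReal.ofReal_ne_top (hspan c hc)
    rw [hw'def]
    exact ENNReal.ofReal_toReal hne
  have hspex : ∀ c ∈ H', ∃ x y, ∃ p : (toSG H).Walk x y,
      c = s(x, y) ∧ p.edges.Nodup ∧ walkWeight w p = edist H w c := by
    intro c hc
    have hcC := hH'sub hc
    obtain ⟨x, y, hxy, rfl⟩ := not_isDiag_exists (hHdiag c hcC)
    obtain ⟨p, hpnd, hpw⟩ := exists_walk_edist H w
      (ne_top_of_le_ne_top ENNReal.ofReal_ne_top (hspan _ hcC))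
    exact ⟨x, y, p, rfl, hpnd, hpw⟩
  choose spx spy spw hsp1 hsp2 hsp3 using hspex
  have cover : ∀ (a b : V) (p : (toSG H').Walk a b), ∃ Wc : (toSG H).Walk a b,
      walkWeight w Wc = walkWeight w' p ∧
      ∀ c ∈ Wc.edges, ∃ e', ∃ _ : e' ∈ p.edges, ∃ h' : e' ∈ H', c ∈ (spw e' h').edges := by
    intro a b p
    induction p with
    | nil => exact ⟨SimpleGraph.Walk.nil, by simp, by simp⟩
    | @cons a c b h q ih =>
        obtain ⟨Wq, hWq, hWqmem⟩ := ih
        have hac : s(a, c) ∈ H' ∧ a ≠ c := by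
          rw [toSG, fromEdgeSet_adj] at h
          simpa using h
        have h' : s(a, c) ∈ H' := hac.1
        have hseq : s(spx s(a, c) h', spy s(a, c) h') = s(a, c) := (hsp1 s(a, c) h').symm
        have hP : ∃ P : (toSG H).Walk a c, walkWeight w P = edist H w s(a, c) ∧
            ∀ cc, cc ∈ P.edges → cc ∈ (spw s(a, c) h').edges := by
          rcases Sym2.eq_iff.mp hseq with ⟨h1, h2⟩ | ⟨h1, h2⟩
          · refine ⟨(spw s(a, c) h').copy h1 h2, ?_, ?_⟩
            · rw [walkWeight_copy, hsp3]
            · intro cc hcc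
              rwa [SimpleGraph.Walk.edges_copy] at hcc
          · refine ⟨(spw s(a, c) h').reverse.copy h2 h1, ?_, ?_⟩
            · rw [walkWeight_copy, walkWeight_reverse, hsp3]
            · intro cc hcc
              rw [SimpleGraph.Walk.edges_copy, SimpleGraph.Walk.edges_reverse] at hcc
              exact List.mem_reverse.mp hcc
        obtain ⟨P, hPw, hPmem⟩ := hP
        refine ⟨P.append Wq, ?_, ?_⟩
        · rw [walkWeight_append, hPw, walkWeight_cons, hWq, hw'eq s(a, c) (hH'sub h')]
        · intro cc hcc
          rw [SimpleGraph.Walk.edges_append, List.mem_append] at hcc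
          rcases hcc with hcc | hcc
          · exact ⟨s(a, c), by simp, h', hPmem cc hcc⟩
          · obtain ⟨e'', h1, h2, h3⟩ := hWqmem cc hcc
            exact ⟨e'', by simp [h1], h2, h3⟩
  have hCL : ∀ e, e ∈ H → ∃ e', ∃ h' : e' ∈ H', e ∈ (spw e' h').edges ∧
      ENNReal.ofReal (w' e') ≤ ENNReal.ofReal (t * w e) := by
    intro e heH
    obtain ⟨u, v, huv, heq⟩ := not_isDiag_exists (hHdiag e (hHsub heH))
    have hwe : 0 < w e := hpos e (hHsub heH)
    have hde : edist H w s(u, v) = ENNReal.ofReal (w e) := by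
      rw [heq] at heH ⊢
      exact edist_eq_of_mem heH huv
    have hb : edist H' w' s(u, v) ≤ ENNReal.ofReal (t * w e) := by
      calc edist H' w' s(u, v) ≤ ENNReal.ofReal t * edist H w s(u, v) := hH'span u v
        _ = ENNReal.ofReal t * ENNReal.ofReal (w e) := by rw [hde]
        _ = ENNReal.ofReal (t * w e) := (ENNReal.ofReal_mul ht0).symm
    have hne : edist H' w' s(u, v) ≠ ⊤ := ne_top_of_le_ne_top ENNReal.ofReal_ne_top hb
    obtain ⟨p, hpnd, hpw⟩ := exists_walk_edist H' w' hne
    obtain ⟨Wc, hWcw, hWcmem⟩ := cover u v p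
    have hWle : walkWeight w Wc ≤ ENNReal.ofReal (t * w e) := by
      rw [hWcw, hpw]; exact hb
    have hkey : e ∈ Wc.edges := key_mem w ht ht2 hw hnd hsort hgreedy huv heq heH hwe Wc hWle
    obtain ⟨e', h1, h', h3⟩ := hWcmem e hkey
    refine ⟨e', h', h3, ?_⟩
    calc ENNReal.ofReal (w' e') ≤ walkWeight w' p := single_le_sum' _ h1
      _ = edist H' w' s(u, v) := hpw
      _ ≤ ENNReal.ofReal (t * w e) := hb
  choose φ hφ1 hφ2 hφ3 using hCL
  apply Finset.card_le_card_of_injOn (fun e => if he : e ∈ H then φ e he else e)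
  · intro e heM
    simp only [Finset.mem_coe] at heM
    simp only [dif_pos heM]
    exact hφ1 e heM
  · intro e₁ he₁ e₂ he₂ hfeq
    simp only [Finset.mem_coe] at he₁ he₂
    simp only [dif_pos he₁, dif_pos he₂] at hfeq
    by_contra hne12
    have h'₁ := hφ1 e₁ he₁
    have h'₂ := hφ1 e₂ he₂
    have hmem₁ : e₁ ∈ (spw (φ e₁ he₁) h'₁).edges := hφ2 e₁ he₁
    have hmem₂ : e₂ ∈ (spw (φ e₁ he₁) h'₁).edges := by
      have key : ∀ (x : Sym2 V) (hx : x ∈ H'), x = φ e₁ he₁ →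
          e₂ ∈ (spw x hx).edges → e₂ ∈ (spw (φ e₁ he₁) h'₁).edges := by
        rintro x hx rfl hmm
        exact hmm
      exact key _ h'₂ hfeq.symm (hφ2 e₂ he₂)
    have hble₁ := hφ3 e₁ he₁
    have hble₂ : ENNReal.ofReal (w' (φ e₁ he₁)) ≤ ENNReal.ofReal (t * w e₂) := by
      rw [hfeq]; exact hφ3 e₂ he₂
    have hnodup := hsp2 (φ e₁ he₁) h'₁
    have hsum : ENNReal.ofReal (w e₁) + ENNReal.ofReal (w e₂)
        ≤ ENNReal.ofReal (w' (φ e₁ he₁)) := by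
      have h2 := two_le_sum (fun c => ENNReal.ofReal (w c)) hmem₁ hmem₂ hne12
      calc ENNReal.ofReal (w e₁) + ENNReal.ofReal (w e₂)
          ≤ walkWeight w (spw (φ e₁ he₁) h'₁) := h2
        _ = edist H w (φ e₁ he₁) := hsp3 _ _
        _ = ENNReal.ofReal (w' (φ e₁ he₁)) := (hw'eq _ (hH'sub h'₁)).symm
    have hp₁ : 0 < w e₁ := hpos e₁ (hHsub he₁)
    have hp₂ : 0 < w e₂ := hpos e₂ (hHsub he₂)
    have hr₁ : w e₁ + w e₂ ≤ t * w e₁ := by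
      have := le_trans hsum hble₁
      rw [← ENNReal.ofReal_add (hw e₁) (hw e₂)] at this
      exact (ENNReal.ofReal_le_ofReal_iff (by positivity)).mp this
    have hr₂ : w e₁ + w e₂ ≤ t * w e₂ := by
      have := le_trans hsum hble₂
      rw [← ENNReal.ofReal_add (hw e₁) (hw e₂)] at this
      exact (ENNReal.ofReal_le_ofReal_iff (by positivity)).mp this
    nlinarith
end

section
/- Stretching a doubling metric by a factor at most 2 at most doubles the doubling dimension: if (M,δ) has doubling dimension ddim and H is a t-spanner of M with t ≤ 2, then the metric space M_H induced by H has doubling dimension at most 2·ddim. -/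
open SimpleGraph
open scoped ENNReal

variable {V : Type*} [Fintype V] [DecidableEq V]

lemma walkWeight_ge {V : Type*} [MetricSpace V] [Fintype V] [DecidableEq V]
    {G : SimpleGraph V} {u v : V} (p : G.Walk u v) :
    ENNReal.ofReal (dist u v) ≤ walkWeight (mw V) p := by
  induction p with
  | nil => simp [walkWeight]
  | @cons a b c h q ih =>
      have hw : walkWeight (mw V) (SimpleGraph.Walk.cons h q)
          = ENNReal.ofReal (mw V s(a, b)) + walkWeight (mw V) q := by
        simp [walkWeight]
      rw [hw]
      have hmw : mw V s(a, b) = dist a b := rfl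
      calc ENNReal.ofReal (dist a c) ≤ ENNReal.ofReal (dist a b + dist b c) :=
            ENNReal.ofReal_le_ofReal (dist_triangle a b c)
        _ ≤ ENNReal.ofReal (dist a b) + ENNReal.ofReal (dist b c) :=
            ENNReal.ofReal_add_le
        _ ≤ ENNReal.ofReal (mw V s(a, b)) + walkWeight (mw V) q := by
            rw [hmw]; exact add_le_add le_rfl ih

lemma edist_ge_dist {V : Type*} [MetricSpace V] [Fintype V] [DecidableEq V]
    (H : Finset (Sym2 V)) (u v : V) :
    ENNReal.ofReal (dist u v) ≤ edist H (mw V) s(u, v) := by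
  refine le_sInf ?_
  rintro x ⟨a, b, p, he, hw⟩
  have hd : dist u v = dist a b := by
    rw [Sym2.eq_iff] at he
    rcases he with ⟨rfl, rfl⟩ | ⟨rfl, rfl⟩
    · rfl
    · exact _root_.dist_comm u v
  rw [hd, ← hw]
  exact walkWeight_ge p

/-- Stretching a doubling metric by a factor at most `2` at
most doubles the doubling dimension: if `(M, δ)` has doubling dimension `k` and
`H` is a `t`-spanner of `M` with `t ≤ 2`, then the metric induced by `H` has
doubling dimension at most `2 * k`. -/
theorem doubling_of_stretched {V : Type*} [MetricSpace V] [Fintype V] [DecidableEq V]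
    (t : ℝ) (ht1 : 1 ≤ t) (ht2 : t ≤ 2) (H : Finset (Sym2 V)) (k : ℕ)
    (hHsub : H ⊆ completeE V)
    (hHspan : ∀ u v : V, edist H (mw V) s(u, v) ≤ ENNReal.ofReal (t * dist u v))
    (hdd : HasDoublingDim (fun u v : V => dist u v) k) :
    HasDoublingDim (fun u v : V => (edist H (mw V) s(u, v)).toReal) (2 * k) := by
  classical
  -- key bounds on the induced distance
  have hub : ∀ u v : V, (edist H (mw V) s(u, v)).toReal ≤ t * dist u v := by
    intro u v
    exact ENNReal.toReal_le_of_le_ofReal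
      (mul_nonneg (le_trans zero_le_one ht1) dist_nonneg) (hHspan u v)
  have hne : ∀ u v : V, edist H (mw V) s(u, v) ≠ ⊤ := by
    intro u v
    exact ne_top_of_le_ne_top ENNReal.ofReal_ne_top (hHspan u v)
  have hlb : ∀ u v : V, dist u v ≤ (edist H (mw V) s(u, v)).toReal := by
    intro u v
    have := ENNReal.toReal_mono (hne u v) (edist_ge_dist H u v)
    rwa [ENNReal.toReal_ofReal dist_nonneg] at this
  intro x r
  obtain ⟨s1, hs1card, hs1⟩ := hdd x r
  choose f hfcard hf using fun c => hdd c (r / 2)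
  refine ⟨s1.biUnion f, ?_, ?_⟩
  · calc (s1.biUnion f).card ≤ ∑ c ∈ s1, (f c).card := Finset.card_biUnion_le
      _ ≤ ∑ _c ∈ s1, 2 ^ k := Finset.sum_le_sum fun c _ => hfcard c
      _ = s1.card * 2 ^ k := by rw [Finset.sum_const, smul_eq_mul]
      _ ≤ 2 ^ k * 2 ^ k := Nat.mul_le_mul_right _ hs1card
      _ = 2 ^ (2 * k) := by rw [two_mul, pow_add]
  · intro y hy
    have hxy : dist x y ≤ r := le_trans (hlb x y) hy
    obtain ⟨c, hc, hcy⟩ := hs1 y hxy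
    obtain ⟨c', hc', hc'y⟩ := hf c y hcy
    refine ⟨c', Finset.mem_biUnion.mpr ⟨c, hc, hc'⟩, ?_⟩
    calc (edist H (mw V) s(c', y)).toReal ≤ t * dist c' y := hub c' y
      _ ≤ 2 * dist c' y := mul_le_mul_of_nonneg_right ht2 dist_nonneg
      _ ≤ 2 * (r / 2 / 2) := by linarith
      _ = r / 2 := by ring
end

section
/- If an edge e = (u,v) with weight w(e) belongs to the greedy t-spanner H of a graph G, then every simple path in H between u and v other than the edge e itself has weight strictly greater than t·w(e). -/
open SimpleGraph
open scoped ENNReal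

variable {V : Type*} [Fintype V] [DecidableEq V]

set_option linter.unusedSectionVars false

lemma greedyList_subset (w : Sym2 V → ℝ) (t : ℝ) (l : List (Sym2 V)) (H : Finset (Sym2 V)) :
    greedyList w t l H ⊆ H ∪ l.toFinset := by
  induction l generalizing H with
  | nil => simp [greedyList]
  | cons e l ih =>
    rw [greedyList]
    refine (ih _).trans ?_
    split_ifs <;> intro x hx <;> simp at hx ⊢ <;> tauto

lemma greedyList_append (w : Sym2 V → ℝ) (t : ℝ) (l₁ l₂ : List (Sym2 V)) (H : Finset (Sym2 V)) :
    greedyList w t (l₁ ++ l₂) H = greedyList w t l₂ (greedyList w t l₁ H) := by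
  induction l₁ generalizing H with
  | nil => simp [greedyList]
  | cons e l ih => rw [List.cons_append, greedyList, greedyList, ih]

lemma greedy_added (w : Sym2 V → ℝ) (t : ℝ) (l₁ l₂ : List (Sym2 V)) (g : Sym2 V)
    (hnd : (l₁ ++ g :: l₂).Nodup)
    (hg : g ∈ greedyList w t (l₁ ++ g :: l₂) ∅) :
    ENNReal.ofReal (t * w g) < edist (greedyList w t l₁ ∅) w g := by
  rw [greedyList_append, greedyList] at hg
  set Hg := greedyList w t l₁ (∅ : Finset (Sym2 V)) with hHg
  by_contra hc
  rw [if_neg hc] at hg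
  have := greedyList_subset w t l₂ Hg hg
  rw [List.nodup_append] at hnd
  rcases Finset.mem_union.mp this with h | h
  · have h2 := greedyList_subset w t l₁ ∅ h
    simp only [Finset.empty_union, List.mem_toFinset] at h2
    exact hnd.2.2 _ h2 _ List.mem_cons_self rfl
  · exact (List.nodup_cons.mp hnd.2.1).1 (List.mem_toFinset.mp h)

lemma path_edge_not_mem {G : SimpleGraph V} {u v : V} (p : G.Walk u v) (hp : p.IsPath)
    (hne : p.edges ≠ [s(u,v)]) : s(u,v) ∉ p.edges := by
  intro h
  cases p with
  | nil => simp at h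
  | @cons _ x _ hadj q =>
    rw [SimpleGraph.Walk.edges_cons] at h
    rcases List.mem_cons.mp h with h1 | h1
    · rcases Sym2.eq_iff.mp h1 with ⟨-, hvx⟩ | ⟨hux, hvu⟩
      · subst hvx
        have : q = SimpleGraph.Walk.nil := by
          have hq := (SimpleGraph.Walk.cons_isPath_iff _ _).mp hp
          exact SimpleGraph.Walk.isPath_iff_eq_nil.mp hq.1
        subst this
        simp at hne
      · exact hadj.ne (hux.symm ▸ rfl)
    · have hmem := SimpleGraph.Walk.fst_mem_support_of_mem_edges q h1
      exact ((SimpleGraph.Walk.cons_isPath_iff _ _).mp hp).2 hmem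

lemma walk_split {G : SimpleGraph V} {u v : V} (p : G.Walk u v) {f : Sym2 V} (hf : f ∈ p.edges) :
    ∃ (a b : V) (_ : G.Adj a b) (q : G.Walk u a) (r : G.Walk b v),
      f = s(a,b) ∧ p.edges = q.edges ++ s(a,b) :: r.edges := by
  induction p with
  | nil => simp at hf
  | @cons u' x v' hadj q ih =>
    rw [SimpleGraph.Walk.edges_cons] at hf
    rcases List.mem_cons.mp hf with h1 | h1
    · exact ⟨u', x, hadj, SimpleGraph.Walk.nil, q, h1, by simp⟩
    · obtain ⟨a, b, ha, q', r, h2, h3⟩ := ih h1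
      exact ⟨a, b, ha, SimpleGraph.Walk.cons hadj q', r, h2, by simp [h3]⟩

lemma mem_take_of_indexOf_lt {l : List (Sym2 V)} {x : Sym2 V} (hx : x ∈ l) {n : ℕ}
    (h : l.idxOf x < n) : x ∈ l.take n := by
  have hlen := List.idxOf_lt_length_iff.mpr hx
  have : (l.take n)[l.idxOf x]'(by simp [hlen, h]) = x := by
    rw [List.getElem_take]
    exact List.getElem_idxOf hlen
  exact this ▸ List.getElem_mem _

lemma list_decomp (l : List (Sym2 V)) {f : Sym2 V} (hf : f ∈ l) :
    l = l.take (l.idxOf f) ++ f :: l.drop (l.idxOf f + 1) := by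
  have hlen := List.idxOf_lt_length_iff.mpr hf
  conv_lhs => rw [← List.take_append_drop (l.idxOf f) l]
  rw [List.drop_eq_getElem_cons hlen, List.getElem_idxOf hlen]

/-- Any element of `H` that is earlier in `l` than position `n` (where `l[n] ∈ l`) lies
in the partial greedy set built from `l.take n`. -/
lemma mem_partial (w : Sym2 V → ℝ) (t : ℝ) {l : List (Sym2 V)} (hnd : l.Nodup)
    {f : Sym2 V} (hf : f ∈ l) {x : Sym2 V} (hxH : x ∈ greedyList w t l ∅)
    (hxl : x ∈ l) (hlt : l.idxOf x < l.idxOf f) :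
    x ∈ greedyList w t (l.take (l.idxOf f)) ∅ := by
  have hdec := list_decomp l hf
  have hxtake : x ∈ l.take (l.idxOf f) := mem_take_of_indexOf_lt hxl hlt
  have hnd' := hdec ▸ hnd
  rw [List.nodup_append] at hnd'
  have hxnot : x ∉ f :: l.drop (l.idxOf f + 1) := fun h => hnd'.2.2 x hxtake x h rfl
  rw [hdec, greedyList_append] at hxH
  rcases Finset.mem_union.mp (greedyList_subset w t _ _ hxH) with h | h
  · exact h
  · exact absurd (List.mem_toFinset.mp h) hxnot

/-- If an edge `e = (u,v)` belongs to the greedy `t`-spanner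
`H` of `G`, then every simple path in `H` between `u` and `v` other than the
edge `e` itself has weight strictly greater than `t * w(e)`. -/
theorem greedy_second_path (E H : Finset (Sym2 V)) (w : Sym2 V → ℝ) (t : ℝ)
    (ht : 1 ≤ t) (hw : ∀ e ∈ E, 0 < w e)
    (hH : IsGreedy w t E H) :
    ∀ u v : V, s(u, v) ∈ H → ∀ p : (toSG H).Walk u v, p.IsPath →
      p.edges ≠ [s(u, v)] →
      ENNReal.ofReal (t * w s(u, v)) < walkWeight w p := by
  obtain ⟨l, hnd, hmemE, hsort, hgl⟩ := hH
  intro u v heH p hp hne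
  subst hgl
  -- membership in `l` of edges in the spanner
  have hsubl : ∀ x ∈ greedyList w t l ∅, x ∈ l := by
    intro x hx
    have := greedyList_subset w t l ∅ hx
    simpa using this
  have hel : s(u,v) ∈ l := hsubl _ heH
  -- the condition at the time e was considered
  have he_cond : ENNReal.ofReal (t * w s(u,v)) <
      edist (greedyList w t (l.take (l.idxOf s(u,v))) ∅) w s(u,v) := by
    have hdec := list_decomp l hel
    exact greedy_added w t _ _ _ (hdec ▸ hnd) (by rw [← hdec]; exact heH)
  -- u ≠ v
  have huv : u ≠ v := by
    rintro rfl
    have h0 : edist (greedyList w t (l.take (l.idxOf s(u,u))) ∅) w s(u,u) ≤ 0 :=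
      sInf_le ⟨u, u, SimpleGraph.Walk.nil, rfl, by simp [walkWeight]⟩
    exact ENNReal.not_lt_zero (he_cond.trans_le h0)
  -- e is not an edge of p
  have henp : s(u,v) ∉ p.edges := path_edge_not_mem p hp hne
  -- edges of p are in H and non-diagonal
  have hedgeH : ∀ x ∈ p.edges, x ∈ greedyList w t l ∅ ∧ ¬ x.IsDiag := by
    intro x hx
    have := SimpleGraph.Walk.edges_subset_edgeSet p hx
    rw [toSG, SimpleGraph.edgeSet_fromEdgeSet] at this
    exact ⟨this.1, this.2⟩
  -- p has at least one edge
  have hpe_ne : p.edges.toFinset.Nonempty := by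
    cases p with
    | nil => exact absurd rfl huv
    | @cons _ x _ h q => exact ⟨s(u,x), List.mem_toFinset.mpr (by simp)⟩
  -- pick the edge of p that comes latest in l
  obtain ⟨f, hfmem, hfmax⟩ := Finset.exists_max_image p.edges.toFinset
    (fun x => l.idxOf x) hpe_ne
  rw [List.mem_toFinset] at hfmem
  have hfne : f ≠ s(u,v) := fun h => henp (h ▸ hfmem)
  have hfl : f ∈ l := hsubl _ (hedgeH f hfmem).1
  have hidx_ne : l.idxOf f ≠ l.idxOf s(u,v) := by
    intro h
    apply hfne
    have h1 := List.getElem_idxOf (List.idxOf_lt_length_iff.mpr hfl)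
    have h2 := List.getElem_idxOf (List.idxOf_lt_length_iff.mpr hel)
    rw [← h1, ← h2]
    congr 1
  by_cases hcase : l.idxOf f < l.idxOf s(u,v)
  · -- Case A: all edges of p were considered before e
    set He := greedyList w t (l.take (l.idxOf s(u,v))) ∅ with hHe
    have hmemHe : ∀ x ∈ p.edges, x ∈ (toSG He).edgeSet := by
      intro x hx
      have hxl : x ∈ l := hsubl _ (hedgeH x hx).1
      have hxlt : l.idxOf x < l.idxOf s(u,v) :=
        lt_of_le_of_lt (hfmax x (List.mem_toFinset.mpr hx)) hcase
      rw [toSG, SimpleGraph.edgeSet_fromEdgeSet]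
      exact ⟨mem_partial w t hnd hel (hedgeH x hx).1 hxl hxlt, (hedgeH x hx).2⟩
    have hle : edist He w s(u,v) ≤ walkWeight w p := by
      refine sInf_le ⟨u, v, p.transfer (toSG He) hmemHe, rfl, ?_⟩
      simp [walkWeight, SimpleGraph.Walk.edges_transfer]
    exact he_cond.trans_le hle
  · -- Case B: f comes after e; all other edges of p and e itself precede f
    have hcase' : l.idxOf s(u,v) < l.idxOf f :=
      lt_of_le_of_ne (not_lt.mp hcase) (Ne.symm hidx_ne)
    set Hf := greedyList w t (l.take (l.idxOf f)) ∅ with hHf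
    have hf_cond : ENNReal.ofReal (t * w f) < edist Hf w f := by
      have hdec := list_decomp l hfl
      exact greedy_added w t _ _ _ (hdec ▸ hnd) (by rw [← hdec]; exact (hedgeH f hfmem).1)
    -- e is in Hf
    have heHf : s(u,v) ∈ Hf := mem_partial w t hnd hfl heH hel hcase'
    have hediag : ¬ (s(u,v) : Sym2 V).IsDiag := by simpa using huv
    -- edges of p other than f are in Hf
    have hmemHf : ∀ x ∈ p.edges, x ≠ f → x ∈ (toSG Hf).edgeSet := by
      intro x hx hxf
      have hxl : x ∈ l := hsubl _ (hedgeH x hx).1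
      have hxle : l.idxOf x ≤ l.idxOf f := hfmax x (List.mem_toFinset.mpr hx)
      have hxne : l.idxOf x ≠ l.idxOf f := by
        intro h
        apply hxf
        rw [← List.getElem_idxOf (List.idxOf_lt_length_iff.mpr hxl),
          ← List.getElem_idxOf (List.idxOf_lt_length_iff.mpr hfl)]
        congr 1
      rw [toSG, SimpleGraph.edgeSet_fromEdgeSet]
      exact ⟨mem_partial w t hnd hfl (hedgeH x hx).1 hxl (lt_of_le_of_ne hxle hxne),
        (hedgeH x hx).2⟩
    -- w e ≤ w f by sortedness
    have hwef : w s(u,v) ≤ w f := by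
      have := hsort.rel_get_of_lt
        (a := ⟨l.idxOf s(u,v), List.idxOf_lt_length_iff.mpr hel⟩)
        (b := ⟨l.idxOf f, List.idxOf_lt_length_iff.mpr hfl⟩) hcase'
      simpa [List.get_eq_getElem, List.getElem_idxOf] using this
    -- split p at f
    obtain ⟨a, b, hab, q, r, hfab, hedges⟩ := walk_split p hfmem
    have hnd_edges : p.edges.Nodup :=
      p.edges_nodup_of_support_nodup hp.support_nodup
    have hfq : f ∉ q.edges := by
      rw [hedges, ← hfab] at hnd_edges
      intro h
      exact (List.nodup_append.mp hnd_edges).2.2 _ h _ List.mem_cons_self rfl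
    have hfr : f ∉ r.edges := by
      rw [hedges, ← hfab] at hnd_edges
      have := (List.nodup_append.mp hnd_edges).2.1
      exact (List.nodup_cons.mp this).1
    have hq : ∀ x ∈ q.edges, x ∈ (toSG Hf).edgeSet := fun x hx =>
      hmemHf x (hedges ▸ List.mem_append_left _ hx) (fun h => hfq (h ▸ hx))
    have hr : ∀ x ∈ r.edges, x ∈ (toSG Hf).edgeSet := fun x hx =>
      hmemHf x (hedges ▸ List.mem_append_right _ (List.mem_cons_of_mem _ hx))
        (fun h => hfr (h ▸ hx))
    have huva : (toSG Hf).Adj u v := by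
      rw [toSG, SimpleGraph.fromEdgeSet_adj]
      exact ⟨heHf, huv⟩
    let W : (toSG Hf).Walk a b :=
      ((q.transfer (toSG Hf) hq).reverse).append
        (SimpleGraph.Walk.cons huva (r.transfer (toSG Hf) hr).reverse)
    have hWle : edist Hf w f ≤ walkWeight w W := sInf_le ⟨a, b, W, hfab, rfl⟩
    have hWeight : walkWeight w W =
        (q.edges.map fun x => ENNReal.ofReal (w x)).sum + (ENNReal.ofReal (w s(u,v)) +
          (r.edges.map fun x => ENNReal.ofReal (w x)).sum) := by
      simp [W, walkWeight, SimpleGraph.Walk.edges_append, SimpleGraph.Walk.edges_reverse,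
        SimpleGraph.Walk.edges_transfer, List.map_reverse, List.sum_reverse]
    have hpWeight : walkWeight w p =
        (q.edges.map fun x => ENNReal.ofReal (w x)).sum + (ENNReal.ofReal (w f) +
          (r.edges.map fun x => ENNReal.ofReal (w x)).sum) := by
      rw [walkWeight, hedges, ← hfab]
      simp
    have ht0 : (0:ℝ) ≤ t := le_trans zero_le_one ht
    calc ENNReal.ofReal (t * w s(u,v)) ≤ ENNReal.ofReal (t * w f) :=
          ENNReal.ofReal_le_ofReal (mul_le_mul_of_nonneg_left hwef ht0)
      _ < walkWeight w W := hf_cond.trans_le hWle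
      _ ≤ walkWeight w p := by
          rw [hWeight, hpWeight]
          exact add_le_add_right (add_le_add_left (ENNReal.ofReal_le_ofReal hwef) _) _
end
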